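/- arXiv:2410.22563 — 4 statements merged into one kernel-verified Lean document; each statement's English description precedes it below -/
import Mathlib

section
/- Suppose Assumption (A) holds together with r(n−1) < (3/7)(1 − 1/α), r(n−1) < (3/7)(1 − 1/β), and r(n−1) < (1/10)(1/α + 1/β − 1). Then the cone Ψ is contracting-invariant and expanding for the pair of matrices {A_L, A_R}. -/
open Matrix Polynomial Finset

noncomputable section

/-- The companion-type matrix of the `n`-dimensional border-collision normal form:
`(i,1)` entry is `-a i`, `(i,i+1)` entries are `1`, all other entries `0`. -/
def bcMat (n : ℕ) (a : Fin n → ℝ) : Matrix (Fin n) (Fin n) ℝ :=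
  Matrix.of fun i j =>
    (if (j : ℕ) = 0 then -a i else 0) + (if (j : ℕ) = (i : ℕ) + 1 then 1 else 0)

/-- The vector `b = (1,0,…,0)`. -/
def bcVec (n : ℕ) : Fin n → ℝ := fun i => if (i : ℕ) = 0 then 1 else 0

/-- `ρ` is an eigenvalue of `M` (of algebraic multiplicity one, automatic when `|ρ| > r`)
and all remaining eigenvalues of `M` over `ℂ`, counted with multiplicity,
have modulus at most `r`. -/
def specA (n : ℕ) (M : Matrix (Fin n) (Fin n) ℝ) (ρ r : ℝ) : Prop :=
  ∃ lam : Fin (n - 1) → ℂ,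
    (∀ j, ‖lam j‖ ≤ r) ∧
      M.charpoly.map (algebraMap ℝ ℂ) =
        (X - C (ρ : ℂ)) * ∏ j : Fin (n - 1), (X - C (lam j))

/-- Assumption (A). -/
def assumptionA (n : ℕ) (aL aR : Fin n → ℝ) (α β r : ℝ) : Prop :=
  1 < α ∧ 1 < β ∧ 0 < r ∧ r < 1 ∧
    specA n (bcMat n aL) α r ∧ specA n (bcMat n aR) (-β) r

/-- The border-collision normal form map `f`. -/
def bcf (n : ℕ) (aL aR : Fin n → ℝ) (x : Fin n → ℝ) : Fin n → ℝ :=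
  if ∀ i : Fin n, (i : ℕ) = 0 → x i ≤ 0 then (bcMat n aL).mulVec x + bcVec n
  else (bcMat n aR).mulVec x + bcVec n

/-- The fixed point `Y = (I − A_L)⁻¹ b`. -/
def Ypt (n : ℕ) (aL : Fin n → ℝ) : Fin n → ℝ :=
  ((1 - bcMat n aL)⁻¹).mulVec (bcVec n)

/-- The row vector `u = (α^{n-1}, …, α, 1)`. -/
def uvec (n : ℕ) (α : ℝ) : Fin n → ℝ := fun i => α ^ (n - 1 - (i : ℕ))

/-- The hyperplane `E = {x : uᵀ(x − Y) = 0}`. -/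
def Eset (n : ℕ) (aL : Fin n → ℝ) (α : ℝ) : Set (Fin n → ℝ) :=
  {x | ∑ i : Fin n, uvec n α i * (x i - Ypt n aL i) = 0}

/-- The slab `H = {x : |x_i| ≤ M_i r^{i-1}, i = 2,…,n}` with
`M_i = (2α/(α−1))·binom(n−1,i−1)`. -/
def Hset (n : ℕ) (α r : ℝ) : Set (Fin n → ℝ) :=
  {x | ∀ i : Fin n, 1 ≤ (i : ℕ) →
    |x i| ≤ 2 * α / (α - 1) * ((n - 1).choose (i : ℕ) : ℝ) * r ^ (i : ℕ)}

/-- The first component `C₁` of the point `C`. -/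
def Cfirst (n : ℕ) (aL aR : Fin n → ℝ) (α : ℝ) : ℝ :=
  (1 - 1 / (1 - bcMat n aL).det +
      1 / (1 - bcMat n aL).det *
        ∑ k ∈ univ.filter (fun k : Fin n => 1 ≤ (k : ℕ)),
          α ^ (-((k : ℕ) : ℤ)) *
            ∑ j ∈ univ.filter (fun j : Fin n => (k : ℕ) ≤ (j : ℕ)), aL j) /
    ∑ i : Fin n, α ^ (-((i : ℕ) : ℤ)) * aR i

/-- The point `C = (C₁, 0, …, 0)`. -/
def Cpt (n : ℕ) (aL aR : Fin n → ℝ) (α : ℝ) : Fin n → ℝ :=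
  fun i => if (i : ℕ) = 0 then Cfirst n aL aR α else 0

/-- The polytope `Ω = Conv({C} ∪ (E ∩ H))`. -/
def OmegaSet (n : ℕ) (aL aR : Fin n → ℝ) (α r : ℝ) : Set (Fin n → ℝ) :=
  convexHull ℝ ({Cpt n aL aR α} ∪ (Eset n aL α ∩ Hset n α r))

/-- The cone `Ψ` of scalar multiples of vectors `(1, m₁, …, m_{n-1})` with
`|m_i| ≤ N_i r^{i-1}`, `N_i = ((min(α,β)−1)/2)·binom(n−1,i−1)`. -/
def PsiSet (n : ℕ) (α β r : ℝ) : Set (Fin n → ℝ) :=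
  {x | ∃ γ : ℝ, ∃ v : Fin n → ℝ,
    (∀ i : Fin n, (i : ℕ) = 0 → v i = 1) ∧
    (∀ i : Fin n, 1 ≤ (i : ℕ) →
      |v i| ≤ (min α β - 1) / 2 * ((n - 1).choose ((i : ℕ) - 1) : ℝ) * r ^ ((i : ℕ) - 1)) ∧
    x = γ • v}

/-- `P` is the vertex `P^(s)`: the point of `E` whose `i`-th component, `i = 2,…,n`,
is `s_{i-1}·M_i r^{i-1}`. -/
def isVertexP (n : ℕ) (aL : Fin n → ℝ) (α r : ℝ) (s : Fin (n - 1) → ℝ)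
    (P : Fin n → ℝ) : Prop :=
  P ∈ Eset n aL α ∧
    ∀ i : Fin n, ∀ _h : 1 ≤ (i : ℕ),
      P i = s ⟨(i : ℕ) - 1, by have := i.isLt; omega⟩ *
        (2 * α / (α - 1) * ((n - 1).choose (i : ℕ) : ℝ) * r ^ (i : ℕ))

/-- The `k`-th elementary symmetric polynomial of `η`. -/
def esym {m : ℕ} (η : Fin m → ℂ) (k : ℕ) : ℂ :=
  ∑ t ∈ powersetCard k univ, ∏ j ∈ t, η j

end

variable {R : Type*} [CommRing R]

noncomputable def compM (n : ℕ) (a : Fin n → R) : Matrix (Fin n) (Fin n) (Polynomial R) :=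
  Matrix.of fun i j =>
    (if i = j then X else 0) + (if (j : ℕ) = 0 then C (a i) else 0)
      - (if (j : ℕ) = (i : ℕ) + 1 then 1 else 0)

lemma det_compM : ∀ (n : ℕ) (a : Fin (n+1) → R),
    (compM (n+1) a).det = X^(n+1) + ∑ i : Fin (n+1), C (a i) * X^(n - (i:ℕ)) := by
  intro n
  induction n with
  | zero =>
    intro a
    rw [det_fin_one]
    simp [compM]
  | succ n ih =>
    intro a
    rw [det_succ_row _ (Fin.last (n+1))]
    rw [Fin.sum_univ_castSucc]
    have hminor_last : (compM (n+2) a).submatrix (Fin.last (n+1)).succAbove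
        (Fin.last (n+1)).succAbove = compM (n+1) (a ∘ Fin.castSucc) := by
      ext i j
      simp [compM, Fin.succAbove_last, Fin.castSucc_inj]
    have hminor_zero : ((compM (n+2) a).submatrix (Fin.last (n+1)).succAbove
        ((0 : Fin (n+2)).succAbove)).det = (-1)^(n+1) := by
      have hM : (compM (n+2) a).submatrix (Fin.last (n+1)).succAbove ((0 : Fin (n+2)).succAbove)
          = Matrix.of (fun i j : Fin (n+1) =>
            (if (i : ℕ) = (j : ℕ) + 1 then X else 0) - (if i = j then 1 else 0)) := by
        apply Matrix.ext
        intro i j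
        simp only [submatrix_apply, Fin.succAbove_last, Fin.succAbove_zero, compM,
          Matrix.of_apply]
        have h3 : (Fin.castSucc i = Fin.succ j) ↔ ((i : ℕ) = (j : ℕ) + 1) := by
          rw [Fin.ext_iff]; simp
        have h4 : (((Fin.succ j : Fin (n+2)) : ℕ) = ((Fin.castSucc i : Fin (n+2)) : ℕ) + 1)
            ↔ (i = j) := by
          rw [Fin.ext_iff]; simp; omega
        have h5 : ¬ (((Fin.succ j : Fin (n+2)) : ℕ) = 0) := by simp
        rw [if_congr h3 rfl rfl, if_congr h4 rfl rfl, if_neg h5, add_zero]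
      rw [hM, Matrix.det_of_lowerTriangular]
      · have : ∀ i : Fin (n+1), ¬ ((i:ℕ) = (i:ℕ)+1) := fun i => by omega
        simp [this]
      · intro i j hij
        have h5' : i < j := OrderDual.toDual_lt_toDual.mp hij
        have h5 : (i:ℕ) < (j:ℕ) := h5'
        simp only [Matrix.of_apply]
        rw [if_neg (by omega), if_neg (by rw [Fin.ext_iff]; omega)]
        simp
    have hrow0 : compM (n+2) a (Fin.last (n+1)) (0 : Fin (n+2)) = C (a (Fin.last (n+1))) := by
      have h1 : ¬ (Fin.last (n+1) = (0 : Fin (n+2))) := by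
        rw [Fin.ext_iff]; simp
      have h3 : ¬ (((0 : Fin (n+2)) : ℕ) = ((Fin.last (n+1) : Fin (n+2)) : ℕ) + 1) := by
        simp
      simp [compM, h1, h3]
    have hrowlast : compM (n+2) a (Fin.last (n+1)) (Fin.last (n+1)) = X := by
      have h2 : ¬ (((Fin.last (n+1) : Fin (n+2)) : ℕ) = 0) := by simp
      have h3 : ¬ (((Fin.last (n+1) : Fin (n+2)) : ℕ) = ((Fin.last (n+1) : Fin (n+2)) : ℕ) + 1) := by
        omega
      simp [compM, h2, h3]
    have hsum : ∑ i : Fin (n+1),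
        (-1 : Polynomial R) ^ ((Fin.last (n+1) : ℕ) + ((Fin.castSucc i : Fin (n+2)) : ℕ)) *
          compM (n+1+1) a (Fin.last (n+1)) (Fin.castSucc i) *
          ((compM (n+1+1) a).submatrix (Fin.last (n+1)).succAbove (Fin.castSucc i).succAbove).det
        = C (a (Fin.last (n+1))) := by
      rw [Finset.sum_eq_single (0 : Fin (n+1))]
      · simp only [Fin.castSucc_zero]
        rw [hrow0, hminor_zero]
        have hc : ((0 : Fin (n+2)) : ℕ) = 0 := rfl
        rw [hc, Fin.val_last, add_zero, mul_comm, ← mul_assoc, ← pow_add, ← two_mul,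
          Even.neg_one_pow (even_two_mul _), one_mul]
      · intro i _ hi
        have hz : compM (n+1+1) a (Fin.last (n+1)) (Fin.castSucc i) = 0 := by
          have h1 : ¬ (Fin.last (n+1) = Fin.castSucc i) := by
            rw [Fin.ext_iff, Fin.val_last, Fin.coe_castSucc]
            have := i.isLt; omega
          have h2 : ¬ (((Fin.castSucc i : Fin (n+2)) : ℕ) = 0) := by
            rw [Fin.coe_castSucc]
            intro h; exact hi (Fin.ext h)
          have h3 : ¬ (((Fin.castSucc i : Fin (n+2)) : ℕ) = ((Fin.last (n+1) : Fin (n+2)) : ℕ) + 1) := by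
            rw [Fin.coe_castSucc, Fin.val_last]
            have := i.isLt; omega
          simp only [compM, Matrix.of_apply]
          rw [if_neg h1, if_neg h2, if_neg h3]
          simp
        rw [hz, mul_zero, zero_mul]
      · intro h
        exact absurd (Finset.mem_univ _) h
    rw [hsum, hrowlast, hminor_last, ih]
    rw [Fin.val_last, ← two_mul, Even.neg_one_pow (even_two_mul _), one_mul]
    rw [Fin.sum_univ_castSucc (f := fun i : Fin (n+2) => C (a i) * X ^ (n + 1 - (i:ℕ)))]
    rw [Fin.val_last, Nat.sub_self, pow_zero, mul_one]
    rw [mul_add, ← pow_succ', Finset.mul_sum]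
    have hterm : ∀ i : Fin (n+1), X * (C ((a ∘ Fin.castSucc) i) * X ^ (n - (i:ℕ)))
        = C (a (Fin.castSucc i)) * X ^ (n + 1 - ((Fin.castSucc i : Fin (n+2)) : ℕ)) := by
      intro i
      simp only [Function.comp_apply, Fin.coe_castSucc]
      have h : n + 1 - (i:ℕ) = (n - (i:ℕ)) + 1 := by have := i.isLt; omega
      rw [h, pow_succ]
      ring
    rw [Finset.sum_congr rfl (fun i _ => hterm i)]
    ring

lemma charmatrix_bcMat (n : ℕ) (a : Fin n → ℝ) :
    charmatrix (bcMat n a) = compM n a := by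
  apply Matrix.ext
  intro i j
  by_cases h : i = j
  · subst h
    rw [charmatrix_apply_eq]
    have h2 : ¬ ((i:ℕ) = (i:ℕ) + 1) := by omega
    simp [compM, bcMat, h2]
    by_cases h0 : (i:ℕ) = 0 <;> simp [h0, sub_eq_add_neg]
  · rw [charmatrix_apply_ne _ _ _ h]
    simp only [compM, bcMat, Matrix.of_apply, if_neg h]
    push_cast
    by_cases h0 : (j:ℕ) = 0 <;> by_cases h1 : (j:ℕ) = (i:ℕ)+1 <;>
      simp [h0, h1] <;> ring

lemma ms_sum_le (B : ℝ) (hB : 0 ≤ B) : ∀ (t : Multiset ℝ), (∀ x ∈ t, x ≤ B) →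
    t.sum ≤ (Multiset.card t : ℝ) * B := by
  intro t
  refine Multiset.induction_on t (by intro _; simp) ?_
  intro a t ih h
  rw [Multiset.sum_cons, Multiset.card_cons]
  push_cast
  have h1 : a ≤ B := h a (Multiset.mem_cons_self a t)
  have h2 := ih (fun x hx => h x (Multiset.mem_cons_of_mem hx))
  nlinarith [Multiset.card t |>.cast_nonneg (α := ℝ)]

lemma ms_prod_le (r : ℝ) (hr : 0 ≤ r) : ∀ (t : Multiset ℂ), (∀ z ∈ t, ‖z‖ ≤ r) →
    (t.map (norm : ℂ → ℝ)).prod ≤ r ^ Multiset.card t := by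
  intro t
  refine Multiset.induction_on t (by intro _; simp) ?_
  intro a t ih h
  rw [Multiset.map_cons, Multiset.prod_cons, Multiset.card_cons, pow_succ']
  have h1 : ‖a‖ ≤ r := h a (Multiset.mem_cons_self a t)
  have h2 := ih (fun x hx => h x (Multiset.mem_cons_of_mem hx))
  have hp : (0:ℝ) ≤ (t.map (norm : ℂ → ℝ)).prod :=
    Multiset.prod_nonneg (by intro x hx; obtain ⟨z, _, rfl⟩ := Multiset.mem_map.mp hx
                             exact norm_nonneg z)
  exact mul_le_mul h1 h2 hp hr

lemma abs_esymm_le (s : Multiset ℂ) (r : ℝ) (hr : 0 ≤ r)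
    (h : ∀ z ∈ s, ‖z‖ ≤ r) (k : ℕ) :
    ‖s.esymm k‖ ≤ ((Multiset.card s).choose k : ℝ) * r ^ k := by
  unfold Multiset.esymm
  calc ‖((s.powersetCard k).map Multiset.prod).sum‖
      ≤ ((((s.powersetCard k).map Multiset.prod)).map norm).sum := by
        exact norm_multiset_sum_le _
    _ ≤ (Multiset.card (((s.powersetCard k).map Multiset.prod).map norm) : ℝ) * r ^ k := by
        apply ms_sum_le _ (by positivity)
        intro x hx
        obtain ⟨y, hy, rfl⟩ := Multiset.mem_map.mp hx
        obtain ⟨t, ht, rfl⟩ := Multiset.mem_map.mp hy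
        obtain ⟨hts, htc⟩ := (Multiset.mem_powersetCard).mp ht
        rw [show ‖t.prod‖ = (t.map (norm : ℂ → ℝ)).prod from map_multiset_prod (normHom : ℂ →*₀ ℝ) t]
        calc (t.map (norm : ℂ → ℝ)).prod ≤ r ^ Multiset.card t :=
              ms_prod_le r hr t (fun z hz => h z (Multiset.mem_of_le hts hz))
          _ = r ^ k := by rw [htc]
    _ = ((Multiset.card s).choose k : ℝ) * r ^ k := by
        rw [Multiset.card_map, Multiset.card_map, Multiset.card_powersetCard]

lemma Qcoeff_abs (m : ℕ) (lam : Fin m → ℂ) (r : ℝ) (hr : 0 ≤ r)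
    (hlam : ∀ j, ‖lam j‖ ≤ r) (k : ℕ) (hk : k ≤ m) :
    ‖(∏ j : Fin m, (X - C (lam j))).coeff k‖ ≤ (m.choose (m-k) : ℝ) * r^(m-k) := by
  have hprod : ∏ j : Fin m, (X - C (lam j))
      = (((univ : Finset (Fin m)).val.map lam).map (fun t => X - C t)).prod := by
    rw [Finset.prod_eq_multiset_prod, Multiset.map_map]
    rfl
  have hcard : Multiset.card ((univ : Finset (Fin m)).val.map lam) = m := by
    simp
  rw [hprod, Multiset.prod_X_sub_C_coeff _ (by rw [hcard]; exact hk), hcard]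
  rw [norm_mul, norm_pow]
  have habs1 : ‖(-1 : ℂ)‖ = 1 := by simp
  rw [habs1, one_pow, one_mul]
  refine le_trans (abs_esymm_le _ r hr ?_ (m-k)) (by rw [hcard])
  intro z hz
  obtain ⟨j, _, rfl⟩ := Multiset.mem_map.mp hz
  exact hlam j

lemma Qcoeff_top (m : ℕ) (lam : Fin m → ℂ) :
    (∏ j : Fin m, (X - C (lam j))).coeff m = 1 := by
  have hprod : ∏ j : Fin m, (X - C (lam j))
      = (((univ : Finset (Fin m)).val.map lam).map (fun t => X - C t)).prod := by
    rw [Finset.prod_eq_multiset_prod, Multiset.map_map]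
    rfl
  have hcard : Multiset.card ((univ : Finset (Fin m)).val.map lam) = m := by simp
  rw [hprod, Multiset.prod_X_sub_C_coeff _ (by rw [hcard]), hcard, Nat.sub_self]
  simp [Multiset.esymm]

lemma coeff_poly_form (n : ℕ) (hn : 1 ≤ n) (b : Fin n → ℂ) (j : Fin n) :
    (X^n + ∑ i : Fin n, C (b i) * X^(n-1-(i:ℕ))).coeff (n-1-(j:ℕ)) = b j := by
  rw [coeff_add, coeff_X_pow, if_neg (by have := j.isLt; omega), zero_add, finset_sum_coeff]
  rw [Finset.sum_eq_single j]
  · rw [coeff_C_mul, coeff_X_pow, if_pos rfl, mul_one]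
  · intro i _ hij
    rw [coeff_C_mul, coeff_X_pow, if_neg, mul_zero]
    intro h
    apply hij
    have hi := i.isLt
    have hj := j.isLt
    exact Fin.ext (by omega)
  · intro h
    exact absurd (Finset.mem_univ _) h

lemma charpoly_bcMat (n : ℕ) (hn : 1 ≤ n) (a : Fin n → ℝ) :
    (bcMat n a).charpoly = X^n + ∑ i : Fin n, C (a i) * X^(n-1-(i:ℕ)) := by
  obtain ⟨m, rfl⟩ : ∃ m, n = m + 1 := ⟨n - 1, by omega⟩
  unfold Matrix.charpoly
  rw [charmatrix_bcMat, det_compM]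
  norm_num

lemma bc_coeff_bounds (n : ℕ) (hn : 2 ≤ n) (a : Fin n → ℝ) (ρ r : ℝ) (hr : 0 ≤ r)
    (hspec : specA n (bcMat n a) ρ r) :
    (∀ i : Fin n, (i:ℕ) = 0 → |ρ| - ((n:ℝ) - 1) * r ≤ |a i|) ∧
    (∀ j : Fin n, |a j| ≤ |ρ| * ((n-1).choose (j:ℕ) : ℝ) * r^(j:ℕ)
        + ((n-1).choose ((j:ℕ)+1) : ℝ) * r^((j:ℕ)+1)) := by
  obtain ⟨lam, hlam, hfac⟩ := hspec
  rw [charpoly_bcMat n (by omega) a] at hfac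
  have hmap : (X^n + ∑ i : Fin n, C (a i) * X^(n-1-(i:ℕ))).map (algebraMap ℝ ℂ)
      = X^n + ∑ i : Fin n, C ((a i : ℂ)) * X^(n-1-(i:ℕ)) := by
    simp [Polynomial.map_add, Polynomial.map_pow, Polynomial.map_sum, Polynomial.map_mul]
  rw [hmap] at hfac
  set Q := ∏ j : Fin (n-1), (X - C (lam j)) with hQ
  have hco : ∀ j : Fin n, ((a j : ℂ)) = ((X - C ((ρ:ℝ) : ℂ)) * Q).coeff (n-1-(j:ℕ)) := by
    intro j
    rw [← hfac, coeff_poly_form n (by omega) _ j]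
  have hXQ : ∀ k : ℕ, ((X - C ((ρ:ℝ) : ℂ)) * Q).coeff k = (X * Q).coeff k - (ρ:ℂ) * Q.coeff k := by
    intro k
    rw [sub_mul, coeff_sub, coeff_C_mul]
  have hQb : ∀ k, k ≤ n-1 → ‖Q.coeff k‖ ≤ ((n-1).choose (n-1-k) : ℝ) * r^(n-1-k) :=
    fun k hk => Qcoeff_abs (n-1) lam r hr hlam k hk
  constructor
  · intro i hi
    have h1 : ((a i : ℂ)) = Q.coeff (n-2) - (ρ:ℂ) := by
      rw [hco i, hi, Nat.sub_zero, hXQ]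
      have he : n - 1 = (n-2) + 1 := by omega
      rw [he, coeff_X_mul, ← he]
      rw [show Q.coeff (n-1) = 1 from Qcoeff_top (n-1) lam]
      ring
    have h2 : ‖((ρ:ℂ))‖ - ‖(Q.coeff (n-2))‖ ≤ ‖((a i : ℂ))‖ := by
      rw [h1]
      have h3 := norm_sub_norm_le ((ρ:ℂ)) (Q.coeff (n-2))
      have h4 : ‖((ρ:ℂ) - Q.coeff (n-2))‖ = ‖(Q.coeff (n-2) - (ρ:ℂ))‖ := by
        rw [norm_sub_rev]
      linarith
    have h4 : ‖(Q.coeff (n-2))‖ ≤ ((n:ℝ)-1) * r := by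
      have := hQb (n-2) (by omega)
      have he : n - 1 - (n-2) = 1 := by omega
      rw [he] at this
      have hch : ((n-1).choose 1 : ℝ) = (n:ℝ) - 1 := by
        rw [Nat.choose_one_right]
        push_cast [Nat.cast_sub (by omega : 1 ≤ n)]
        ring
      rw [hch, pow_one] at this
      exact this
    rw [← Real.norm_eq_abs (a i), ← Real.norm_eq_abs ρ, ← Complex.norm_real (a i), ← Complex.norm_real ρ]
    linarith
  · intro j
    rw [← Real.norm_eq_abs (a j), ← Real.norm_eq_abs ρ, ← Complex.norm_real (a j), ← Complex.norm_real ρ]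
    rw [hco j, hXQ]
    refine le_trans (norm_sub_le _ _) ?_
    have hterm2 : ‖((ρ:ℂ) * Q.coeff (n-1-(j:ℕ)))‖
        ≤ ‖((ρ:ℂ))‖ * (((n-1).choose (j:ℕ) : ℝ) * r^(j:ℕ)) := by
      rw [norm_mul]
      refine mul_le_mul_of_nonneg_left ?_ (norm_nonneg _)
      have := hQb (n-1-(j:ℕ)) (by omega)
      have he : n - 1 - (n-1-(j:ℕ)) = (j:ℕ) := by have := j.isLt; omega
      rwa [he] at this
    have hterm1 : ‖((X * Q).coeff (n-1-(j:ℕ)))‖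
        ≤ ((n-1).choose ((j:ℕ)+1) : ℝ) * r^((j:ℕ)+1) := by
      by_cases hj : (j:ℕ) = n - 1
      · have he : n - 1 - (j:ℕ) = 0 := by omega
        rw [he]
        have h0 : (X * Q).coeff 0 = 0 := by
          rw [mul_coeff_zero, coeff_X_zero, zero_mul]
        rw [h0, norm_zero]
        positivity
      · have he : n - 1 - (j:ℕ) = (n-2-(j:ℕ)) + 1 := by have := j.isLt; omega
        rw [he, coeff_X_mul]
        have := hQb (n-2-(j:ℕ)) (by omega)
        have he2 : n - 1 - (n-2-(j:ℕ)) = (j:ℕ)+1 := by have := j.isLt; omega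
        rwa [he2] at this
    linarith


lemma star_min (μ s : ℝ) (hμ : 1 < μ) (hs : 0 < s) (h : 7*μ*s < 3*(μ-1)) :
    μ*s + s^2 + ((μ-1)/2)*s < ((μ-1)/2)*(μ - s - (μ-1)/2) := by
  nlinarith [mul_pos hs (sub_pos.mpr hμ), mul_pos hs hs, sq_nonneg (μ-1-4*s),
    mul_pos (mul_pos hs hs) (sub_pos.mpr hμ),
    mul_lt_mul_of_pos_left h hs, mul_lt_mul_of_pos_left h (sub_pos.mpr hμ),
    mul_lt_mul_of_pos_left h (mul_pos hs (sub_pos.mpr hμ)), sq_nonneg (μ - 1 - 3*s),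
    sq_nonneg (μ-1-2*s), sq_nonneg (μ-1-7*s), mul_pos (mul_pos hs hs) hs]

lemma exp_core (m s : ℝ) (hm0 : 0 < m) (hm1 : m < 1) (hs : 0 < s)
    (h : 7*(1+m)*s < 3*m) : 4*(1-s)^2 + m^2 < 4*(1-s)^2*(1+m/2-s)^2 := by
  nlinarith [mul_pos hs hm0, mul_pos hs hs, sq_nonneg (m-2*s), sq_nonneg (m*s),
    mul_lt_mul_of_pos_left h hs, mul_lt_mul_of_pos_left h hm0,
    mul_lt_mul_of_pos_left h (mul_pos hs hm0), sq_nonneg (1-s), sq_nonneg (m-s),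
    mul_pos (mul_pos hs hs) hs, mul_pos (mul_pos hm0 hm0) hm0,
    mul_lt_mul_of_pos_left h (mul_pos hs hs), mul_lt_mul_of_pos_left h (mul_pos hm0 hm0)]

lemma exp_ineq (m s : ℝ) (hm0 : 0 < m) (hm1 : m < 1) (hs : 0 < s) (hs1 : s < 1)
    (h : 7*(1+m)*s < 3*m) : 1 + (m/(2*(1-s)))^2 < (1 + m/2 - s)^2 := by
  have h1s : 0 < 1 - s := by linarith
  have hc := exp_core m s hm0 hm1 hs h
  have h4 : (0:ℝ) < 4*(1-s)^2 := by positivity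
  have heq : (m/(2*(1-s)))^2 = m^2/(4*(1-s)^2) := by
    rw [div_pow]
    ring_nf
  have key : m^2/(4*(1-s)^2) < (1+m/2-s)^2 - 1 := by
    rw [div_lt_iff₀ h4]
    nlinarith [hc]
  rw [heq]
  linarith

lemma sum_ite_coe (n : ℕ) (k : ℕ) (f : Fin n → ℝ) :
    ∑ j : Fin n, (if (j:ℕ) = k then f j else 0) = if h : k < n then f ⟨k, h⟩ else 0 := by
  split
  case isTrue h =>
    rw [Finset.sum_eq_single ⟨k, h⟩]
    · simp
    · intro j _ hj
      rw [if_neg]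
      intro hc
      exact hj (Fin.ext hc)
    · intro h'
      exact absurd (Finset.mem_univ _) h'
  case isFalse h =>
    apply Finset.sum_eq_zero
    intro j _
    rw [if_neg]
    intro hc
    exact h (hc ▸ j.isLt)

lemma bc_mulVec (n : ℕ) (hn : 1 ≤ n) (a : Fin n → ℝ) (x : Fin n → ℝ) (i : Fin n) :
    (bcMat n a).mulVec x i = -a i * x ⟨0, by omega⟩
      + (if h : (i:ℕ)+1 < n then x ⟨(i:ℕ)+1, h⟩ else 0) := by
  unfold Matrix.mulVec dotProduct bcMat
  simp only [Matrix.of_apply, add_mul, ite_mul, zero_mul, one_mul]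
  rw [Finset.sum_add_distrib]
  congr 1
  · rw [show (∑ j : Fin n, if (j:ℕ) = 0 then -a i * x j else 0)
        = ∑ j : Fin n, (if (j:ℕ) = 0 then (fun jj : Fin n => -a i * x jj) j else 0) from rfl,
      sum_ite_coe n 0 (fun jj => -a i * x jj), dif_pos (by omega : 0 < n)]
  · rw [sum_ite_coe n ((i:ℕ)+1) x]

lemma sum_sq_le_sq {ι : Type*} (t : Finset ι) (f : ι → ℝ) (h : ∀ i ∈ t, 0 ≤ f i) :
    ∑ i ∈ t, (f i)^2 ≤ (∑ i ∈ t, f i)^2 := by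
  have h1 : ∀ i ∈ t, (f i)^2 ≤ f i * ∑ j ∈ t, f j := by
    intro i hi
    rw [sq]
    exact mul_le_mul_of_nonneg_left (Finset.single_le_sum h hi) (h i hi)
  calc ∑ i ∈ t, (f i)^2 ≤ ∑ i ∈ t, f i * ∑ j ∈ t, f j := Finset.sum_le_sum h1
    _ = (∑ i ∈ t, f i)^2 := by rw [← Finset.sum_mul, sq]

lemma choose_step (N k : ℕ) : N.choose (k+1) ≤ N.choose k * N := by
  have h := Nat.choose_succ_right_eq N k
  calc N.choose (k+1) ≤ N.choose (k+1) * (k+1) := Nat.le_mul_of_pos_right _ (by omega)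
    _ = N.choose k * (N-k) := h
    _ ≤ N.choose k * N := Nat.mul_le_mul_left _ (by omega)

lemma pow_le_inv_one_sub (r : ℝ) (N : ℕ) (hr0 : 0 ≤ r) (hr1 : r < 1) (hs : (N:ℝ)*r < 1) :
    (1+r)^N ≤ 1/(1-(N:ℝ)*r) := by
  have h1 : 1 - (N:ℝ)*r ≤ (1-r)^N := by
    have := one_add_mul_le_pow (a := -r) (by linarith) N
    calc 1 - (N:ℝ)*r = 1 + (N:ℝ)*(-r) := by ring
      _ ≤ (1 + (-r))^N := this
      _ = (1-r)^N := by ring_nf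
  rw [le_div_iff₀ (by linarith)]
  calc (1+r)^N * (1-(N:ℝ)*r) ≤ (1+r)^N * (1-r)^N :=
        mul_le_mul_of_nonneg_left h1 (by positivity)
    _ = ((1+r)*(1-r))^N := by rw [mul_pow]
    _ = (1-r^2)^N := by ring_nf
    _ ≤ 1 := pow_le_one₀ (by nlinarith) (by nlinarith)


noncomputable def Bfun (n : ℕ) (r : ℝ) (k : ℕ) : ℝ := (((n-1).choose k : ℕ) : ℝ) * r^k

set_option maxHeartbeats 1000000 in
lemma psi_side (n : ℕ) (hn : 2 ≤ n) (a : Fin n → ℝ) (α β r ρ : ℝ)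
    (hα : 1 < α) (hβ : 1 < β) (hρ : min α β ≤ ρ) (hr0 : 0 < r) (hr1 : r < 1)
    (hs37 : r * ((n:ℝ)-1) < 3/7 * (1 - 1/(min α β)))
    (hmlt : min α β < 2)
    (hF1 : ∀ i : Fin n, (i:ℕ) = 0 → ρ - ((n:ℝ)-1)*r ≤ |a i|)
    (hF2 : ∀ j : Fin n, |a j| ≤ ρ * (((n-1).choose (j:ℕ)):ℝ) * r^(j:ℕ)
        + (((n-1).choose ((j:ℕ)+1)):ℝ) * r^((j:ℕ)+1))
    (x : Fin n → ℝ) (hx : x ∈ PsiSet n α β r) :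
    (bcMat n a).mulVec x ∈ interior (PsiSet n α β r) ∪ {0} ∧
    ((1 + (min α β - 1)/2 - r*((n:ℝ)-1)) /
        Real.sqrt (1 + ((min α β - 1)/(2*(1 - r*((n:ℝ)-1))))^2))
      * Real.sqrt (∑ i : Fin n, x i ^ 2)
      ≤ Real.sqrt (∑ i : Fin n, ((bcMat n a).mulVec x) i ^ 2) := by
  obtain ⟨γ, v, hv0, hvb, rfl⟩ := hx
  have hn1 : (1:ℝ) ≤ (n:ℝ) - 1 := by
    have : (2:ℝ) ≤ (n:ℝ) := by exact_mod_cast hn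
    linarith
  set μ := min α β with hμdef
  set s := r * ((n:ℝ)-1) with hsdef
  set m := μ - 1 with hmdef
  have hμ1 : 1 < μ := lt_min hα hβ
  have hm0 : 0 < m := by simp only [hmdef]; linarith
  have hm1 : m < 1 := by simp only [hmdef]; linarith
  have hρ1 : 1 < ρ := lt_of_lt_of_le hμ1 hρ
  have hs_pos : 0 < s := by
    apply mul_pos hr0; linarith
  have hμs : 7*μ*s < 3*(μ-1) := by
    have hμ0 : 0 < μ := by linarith
    have h' : 7*μ*s < 7*μ*(3/7 * (1 - 1/μ)) :=
      mul_lt_mul_of_pos_left hs37 (by linarith)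
    calc 7*μ*s < 7*μ*(3/7 * (1 - 1/μ)) := h'
      _ = 3*(μ-1) := by field_simp
  have hs_m2 : s < m/2 := by
    have : 7*s < 7*μ*s := by nlinarith
    simp only [hmdef]; linarith
  have hstar := star_min μ s hμ1 hs_pos hμs
  have hstarρ : ρ*s + s^2 + (m/2)*s < (m/2)*(ρ - s - m/2) := by
    have hd : (ρ-μ)*s ≤ (ρ-μ)*(m/2) :=
      mul_le_mul_of_nonneg_left (le_of_lt hs_m2) (sub_nonneg.mpr hρ)
    simp only [hmdef] at *
    nlinarith
  have hs1 : s < 1 := by linarith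
  -- B function facts
  have hBnonneg : ∀ k, 0 ≤ Bfun n r k := by
    intro k; unfold Bfun; positivity
  have hBpos : ∀ k, k ≤ n-1 → 0 < Bfun n r k := by
    intro k hk
    unfold Bfun
    have : 0 < (n-1).choose k := Nat.choose_pos hk
    positivity
  have hcast : ((n-1 : ℕ) : ℝ) = (n:ℝ) - 1 := by
    push_cast [Nat.cast_sub (by omega : 1 ≤ n)]; ring
  have hBstep : ∀ k : ℕ, Bfun n r (k+1) ≤ s * Bfun n r k := by
    intro k
    unfold Bfun
    have h1 : ((n-1).choose (k+1) : ℝ) ≤ ((n-1).choose k : ℝ) * ((n:ℝ)-1) := by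
      rw [← hcast, ← Nat.cast_mul]
      exact_mod_cast choose_step (n-1) k
    calc ((n-1).choose (k+1) : ℝ) * r^(k+1)
        = (((n-1).choose (k+1) : ℝ)) * (r^k * r) := by rw [pow_succ]
      _ ≤ (((n-1).choose k : ℝ) * ((n:ℝ)-1)) * (r^k * r) := by
          apply mul_le_mul_of_nonneg_right h1 (by positivity)
      _ = s * (((n-1).choose k : ℝ) * r^k) := by rw [hsdef]; ring
  -- the image vector
  set w := (bcMat n a).mulVec v with hwdef
  have hmv : (bcMat n a).mulVec (γ • v) = γ • w := by
    rw [hwdef, Matrix.mulVec_smul]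
  have z0lt : 0 < n := by omega
  have z1lt : 1 < n := by omega
  set z0 : Fin n := ⟨0, z0lt⟩ with hz0
  set z1 : Fin n := ⟨1, z1lt⟩ with hz1
  have hz0v : (z0:ℕ) = 0 := rfl
  have hz1v : (z1:ℕ) = 1 := rfl
  have hv0' : v z0 = 1 := hv0 z0 rfl
  have hvz1 : |v z1| ≤ m/2 := by
    have hb := hvb z1 (by simp [hz1v])
    rw [hz1v] at hb
    simpa using hb
  have hw0 : w z0 = -a z0 + v z1 := by
    rw [hwdef, bc_mulVec n (by omega) a v z0]
    rw [dif_pos (by omega : (z0:ℕ)+1 < n)]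
    have : v ⟨0, by omega⟩ = 1 := hv0 _ rfl
    rw [this, mul_one]
  have habs0 : ρ - s - m/2 ≤ |w z0| := by
    have h1 : ρ - ((n:ℝ)-1)*r ≤ |a z0| := hF1 z0 rfl
    have h2 := abs_sub_abs_le_abs_sub (-a z0) (-(v z1))
    rw [abs_neg, abs_neg] at h2
    have h3 : -a z0 - -(v z1) = -a z0 + v z1 := by ring
    rw [h3] at h2
    rw [hw0]
    have hsr : ((n:ℝ)-1)*r = s := by rw [hsdef]; ring
    linarith
  have hpos0 : 0 < ρ - s - m/2 := by
    have : μ = m + 1 := by rw [hmdef]; ring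
    nlinarith
  have hwz0ne : w z0 ≠ 0 := by
    intro hzz
    rw [hzz, abs_zero] at habs0
    linarith
  -- per-coordinate bound
  have hwi : ∀ i : Fin n, 1 ≤ (i:ℕ) →
      |w i| < ((m/2) * Bfun n r ((i:ℕ)-1)) * |w z0| := by
    intro i hi
    have hIlt := i.isLt
    have hBi : Bfun n r (i:ℕ) ≤ s * Bfun n r ((i:ℕ)-1) := by
      have := hBstep ((i:ℕ)-1)
      rwa [show (i:ℕ)-1+1 = (i:ℕ) by omega] at this
    have hBi1 : Bfun n r ((i:ℕ)+1) ≤ s * (s * Bfun n r ((i:ℕ)-1)) :=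
      le_trans (hBstep (i:ℕ)) (mul_le_mul_of_nonneg_left hBi (le_of_lt hs_pos))
    have htail : |w i| ≤ |a i| + (m/2) * Bfun n r (i:ℕ) := by
      rw [hwdef, bc_mulVec n (by omega) a v i]
      have hv0'' : v ⟨0, by omega⟩ = 1 := hv0 _ rfl
      rw [hv0'', mul_one]
      refine le_trans (abs_add_le _ _) ?_
      rw [abs_neg]
      gcongr
      split
      case isTrue h =>
        have hb := hvb ⟨(i:ℕ)+1, h⟩ (by simp)
        have hidx : ((⟨(i:ℕ)+1, h⟩ : Fin n) : ℕ) - 1 = (i:ℕ) := by simp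
        rw [hidx] at hb
        exact le_trans hb (le_of_eq (by unfold Bfun; ring))
      case isFalse h =>
        rw [abs_zero]
        have := hBnonneg (i:ℕ)
        positivity
    have hai : |a i| ≤ ρ * Bfun n r (i:ℕ) + Bfun n r ((i:ℕ)+1) :=
      le_trans (hF2 i) (le_of_eq (by unfold Bfun; ring))
    have hchain : |w i| ≤ (ρ*s + s^2 + (m/2)*s) * Bfun n r ((i:ℕ)-1) := by
      have hρpos : (0:ℝ) ≤ ρ := by linarith
      have hmpos : (0:ℝ) ≤ m/2 := by linarith
      have t1 : ρ * Bfun n r (i:ℕ) ≤ ρ * (s * Bfun n r ((i:ℕ)-1)) :=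
        mul_le_mul_of_nonneg_left hBi hρpos
      have t3 : (m/2) * Bfun n r (i:ℕ) ≤ (m/2) * (s * Bfun n r ((i:ℕ)-1)) :=
        mul_le_mul_of_nonneg_left hBi hmpos
      calc |w i| ≤ |a i| + (m/2) * Bfun n r (i:ℕ) := htail
        _ ≤ (ρ * Bfun n r (i:ℕ) + Bfun n r ((i:ℕ)+1)) + (m/2) * Bfun n r (i:ℕ) := by
            linarith
        _ ≤ (ρ*s + s^2 + (m/2)*s) * Bfun n r ((i:ℕ)-1) := by
            rw [add_mul, add_mul]
            have : s^2 * Bfun n r ((i:ℕ)-1) = s * (s * Bfun n r ((i:ℕ)-1)) := by ring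
            rw [this]
            have t1' : ρ * (s * Bfun n r ((i:ℕ)-1)) = ρ*s*Bfun n r ((i:ℕ)-1) := by ring
            have t3' : (m/2) * (s * Bfun n r ((i:ℕ)-1)) = (m/2)*s*Bfun n r ((i:ℕ)-1) := by ring
            rw [t1'] at t1
            rw [t3'] at t3
            linarith
    have hBprevpos : 0 < Bfun n r ((i:ℕ)-1) := hBpos _ (by omega)
    calc |w i| ≤ (ρ*s + s^2 + (m/2)*s) * Bfun n r ((i:ℕ)-1) := hchain
      _ < ((m/2)*(ρ - s - m/2)) * Bfun n r ((i:ℕ)-1) :=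
          mul_lt_mul_of_pos_right hstarρ hBprevpos
      _ ≤ ((m/2) * Bfun n r ((i:ℕ)-1)) * |w z0| := by
          have hKpos : 0 ≤ (m/2) * Bfun n r ((i:ℕ)-1) := by
            have := hBnonneg ((i:ℕ)-1); positivity
          calc ((m/2)*(ρ - s - m/2)) * Bfun n r ((i:ℕ)-1)
              = ((m/2) * Bfun n r ((i:ℕ)-1)) * (ρ - s - m/2) := by ring
            _ ≤ ((m/2) * Bfun n r ((i:ℕ)-1)) * |w z0| :=
                mul_le_mul_of_nonneg_left habs0 hKpos
  constructor
  · -- invariance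
    by_cases hγ : γ = 0
    · right
      rw [hγ, zero_smul, Matrix.mulVec_zero]
      rfl
    · left
      rw [hmv]
      set U : Set (Fin n → ℝ) := ⋂ i : Fin n,
        {y : Fin n → ℝ | 1 ≤ (i:ℕ) → |y i| < ((m/2) * Bfun n r ((i:ℕ)-1)) * |y z0|} with hUdef
      have hUopen : IsOpen U := by
        apply isOpen_iInter_of_finite
        intro i
        by_cases hi : 1 ≤ (i:ℕ)
        · have : {y : Fin n → ℝ | 1 ≤ (i:ℕ) → |y i| < ((m/2) * Bfun n r ((i:ℕ)-1)) * |y z0|}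
              = {y : Fin n → ℝ | |y i| < ((m/2) * Bfun n r ((i:ℕ)-1)) * |y z0|} := by
            ext y; simp [hi]
          rw [this]
          exact isOpen_lt ((continuous_apply i).abs)
            (continuous_const.mul ((continuous_apply z0).abs))
        · have : {y : Fin n → ℝ | 1 ≤ (i:ℕ) → |y i| < ((m/2) * Bfun n r ((i:ℕ)-1)) * |y z0|}
              = Set.univ := by
            ext y; simp [hi]
          rw [this]
          exact isOpen_univ
      have hUsub : U ⊆ PsiSet n α β r := by
        intro y hy
        simp only [hUdef, Set.mem_iInter, Set.mem_setOf_eq] at hy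
        have hyz0 : y z0 ≠ 0 := by
          intro hzz
          have hcon := hy z1 (by simp [hz1v])
          rw [hzz, abs_zero, mul_zero] at hcon
          exact absurd hcon (not_lt.mpr (abs_nonneg _))
        refine ⟨y z0, fun i => y i / y z0, ?_, ?_, ?_⟩
        · intro i hi
          have hieq : i = z0 := Fin.ext (by rw [hi, hz0v])
          show y i / y z0 = 1
          rw [hieq, div_self hyz0]
        · intro i hi
          have h1 := hy i hi
          show |y i / y z0| ≤ _
          rw [abs_div]
          have h2 : 0 < |y z0| := abs_pos.mpr hyz0
          rw [div_le_iff₀ h2]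
          calc |y i| ≤ ((m/2) * Bfun n r ((i:ℕ)-1)) * |y z0| := le_of_lt h1
            _ = (min α β - 1)/2 * (((n-1).choose ((i:ℕ)-1)):ℝ) * r^((i:ℕ)-1) * |y z0| := by
                rw [hmdef, hμdef, Bfun]; ring
        · funext i
          simp only [Pi.smul_apply, smul_eq_mul]
          rw [mul_div_assoc']
          rw [mul_div_cancel_left₀ _ hyz0]
      have hwU : γ • w ∈ U := by
        simp only [hUdef, Set.mem_iInter, Set.mem_setOf_eq]
        intro i hi
        simp only [Pi.smul_apply, smul_eq_mul, abs_mul]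
        have hγpos : 0 < |γ| := abs_pos.mpr hγ
        calc |γ| * |w i| < |γ| * (((m/2) * Bfun n r ((i:ℕ)-1)) * |w z0|) :=
              mul_lt_mul_of_pos_left (hwi i hi) hγpos
          _ = ((m/2) * Bfun n r ((i:ℕ)-1)) * (|γ| * |w z0|) := by ring
      exact interior_maximal hUsub hUopen hwU
  · -- expansion
    set T : ℝ := 1 + (m/(2*(1-s)))^2 with hTdef
    have hT1 : (1:ℝ) ≤ T := by
      rw [hTdef]
      have : (0:ℝ) ≤ (m/(2*(1-s)))^2 := sq_nonneg _
      linarith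
    have hsqT : 0 < Real.sqrt T := Real.sqrt_pos.mpr (by linarith)
    -- sum of squares of v bounded by T
    have hvsum : ∑ i : Fin n, v i ^ 2 ≤ T := by
      have hsplit : ∑ i ∈ (univ : Finset (Fin n)).erase z0, v i ^ 2 + v z0 ^ 2
          = ∑ i : Fin n, v i ^ 2 :=
        Finset.sum_erase_add _ _ (Finset.mem_univ z0)
      have hsq : ∑ i ∈ (univ : Finset (Fin n)).erase z0, v i ^ 2
          ≤ (∑ i ∈ (univ : Finset (Fin n)).erase z0, |v i|)^2 := by
        calc ∑ i ∈ (univ : Finset (Fin n)).erase z0, v i ^ 2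
            = ∑ i ∈ (univ : Finset (Fin n)).erase z0, |v i| ^ 2 :=
              Finset.sum_congr rfl (fun i _ => (sq_abs _).symm)
          _ ≤ (∑ i ∈ (univ : Finset (Fin n)).erase z0, |v i|)^2 :=
              sum_sq_le_sq _ _ (fun i _ => abs_nonneg _)
      have hbd : ∑ i ∈ (univ : Finset (Fin n)).erase z0, |v i|
          ≤ (m/2) * (1/(1-s)) := by
        have hstep1 : ∑ i ∈ (univ : Finset (Fin n)).erase z0, |v i|
            ≤ ∑ i ∈ (univ : Finset (Fin n)).erase z0, (m/2) * Bfun n r ((i:ℕ)-1) := by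
          apply Finset.sum_le_sum
          intro i hi
          have hine : (i:ℕ) ≠ 0 := by
            intro hc
            exact (Finset.mem_erase.mp hi).1 (Fin.ext (by rw [hc, hz0v]))
          have hb := hvb i (by omega)
          exact le_trans hb (le_of_eq (by unfold Bfun; ring))
        have hstep2 : ∑ i ∈ (univ : Finset (Fin n)).erase z0, (m/2) * Bfun n r ((i:ℕ)-1)
            = (m/2) * ∑ k ∈ Finset.range (n-1), Bfun n r k := by
          rw [Finset.mul_sum]
          apply Finset.sum_bij' (fun (i : Fin n) (_ : i ∈ (univ : Finset (Fin n)).erase z0) => (i:ℕ)-1)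
            (fun (k : ℕ) (hk : k ∈ Finset.range (n-1)) =>
              (⟨k+1, by have := Finset.mem_range.mp hk; omega⟩ : Fin n))
          case hi =>
            intro i hi
            have hne : (i:ℕ) ≠ 0 := by
              intro hc
              exact (Finset.mem_erase.mp hi).1 (Fin.ext (by rw [hc, hz0v]))
            have := i.isLt
            exact Finset.mem_range.mpr (by omega)
          case hj =>
            intro k hk
            apply Finset.mem_erase.mpr
            constructor
            · intro hc
              have : k + 1 = 0 := by
                have := congrArg (fun (z : Fin n) => (z:ℕ)) hc
                simpa [hz0v] using this
              omega
            · exact Finset.mem_univ _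
          case left_neg =>
            intro i hi
            have hne : (i:ℕ) ≠ 0 := by
              intro hc
              exact (Finset.mem_erase.mp hi).1 (Fin.ext (by rw [hc, hz0v]))
            exact Fin.ext (by simp; omega)
          case right_neg =>
            intro k hk
            simp
          case h =>
            intro i hi
            rfl
        have hstep3 : ∑ k ∈ Finset.range (n-1), Bfun n r k ≤ 1/(1-s) := by
          have hsub : ∑ k ∈ Finset.range (n-1), Bfun n r k
              ≤ ∑ k ∈ Finset.range (n-1+1), Bfun n r k := by
            apply Finset.sum_le_sum_of_subset_of_nonneg
            · apply Finset.range_subset_range.mpr; omega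
            · intro k _ _; exact hBnonneg k
          have hpow : ∑ k ∈ Finset.range (n-1+1), Bfun n r k = (r+1)^(n-1) := by
            rw [add_pow]
            apply Finset.sum_congr rfl
            intro k hk
            unfold Bfun
            rw [one_pow]
            ring
          have hber : (1+r)^(n-1) ≤ 1/(1-s) := by
            have hlt : ((n-1 : ℕ):ℝ)*r < 1 := by
              rw [hcast]
              have hss : s = r * ((n:ℝ)-1) := hsdef
              linarith [hs1]
            have := pow_le_inv_one_sub r (n-1) (le_of_lt hr0) hr1 hlt
            rw [hcast] at this
            have hss : s = r * ((n:ℝ)-1) := hsdef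
            calc (1+r)^(n-1) ≤ 1/(1-((n:ℝ)-1)*r) := this
              _ = 1/(1-s) := by rw [hss]; ring_nf
          calc ∑ k ∈ Finset.range (n-1), Bfun n r k
              ≤ ∑ k ∈ Finset.range (n-1+1), Bfun n r k := hsub
            _ = (r+1)^(n-1) := hpow
            _ = (1+r)^(n-1) := by rw [add_comm]
            _ ≤ 1/(1-s) := hber
        calc ∑ i ∈ (univ : Finset (Fin n)).erase z0, |v i|
            ≤ ∑ i ∈ (univ : Finset (Fin n)).erase z0, (m/2) * Bfun n r ((i:ℕ)-1) := hstep1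
          _ = (m/2) * ∑ k ∈ Finset.range (n-1), Bfun n r k := hstep2
          _ ≤ (m/2) * (1/(1-s)) := by
              apply mul_le_mul_of_nonneg_left hstep3 (by linarith)
      have hT2 : ((m/2) * (1/(1-s)))^2 = (m/(2*(1-s)))^2 := by
        rw [div_mul_div_comm]
        ring_nf
      have hsum_nonneg : (0:ℝ) ≤ ∑ i ∈ (univ : Finset (Fin n)).erase z0, |v i| := by
        apply Finset.sum_nonneg; intro i _; exact abs_nonneg _
      have : (∑ i ∈ (univ : Finset (Fin n)).erase z0, |v i|)^2 ≤ (m/(2*(1-s)))^2 := by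
        rw [← hT2]
        apply pow_le_pow_left₀ hsum_nonneg hbd
      rw [← hsplit, hv0', one_pow, hTdef]
      linarith
    have hxnorm : Real.sqrt (∑ i : Fin n, (γ • v) i ^ 2) ≤ |γ| * Real.sqrt T := by
      have h1 : ∑ i : Fin n, (γ • v) i ^ 2 = γ^2 * ∑ i : Fin n, v i ^ 2 := by
        rw [Finset.mul_sum]
        apply Finset.sum_congr rfl
        intro i _
        simp [Pi.smul_apply, smul_eq_mul, mul_pow]
      rw [h1]
      calc Real.sqrt (γ^2 * ∑ i : Fin n, v i ^ 2) ≤ Real.sqrt (γ^2 * T) := by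
            apply Real.sqrt_le_sqrt
            apply mul_le_mul_of_nonneg_left hvsum (sq_nonneg γ)
        _ = |γ| * Real.sqrt T := by
            rw [Real.sqrt_mul (sq_nonneg γ), Real.sqrt_sq_eq_abs]
    have hwnorm : |γ| * (ρ - s - m/2) ≤ Real.sqrt (∑ i : Fin n, ((bcMat n a).mulVec (γ • v)) i ^ 2) := by
      rw [hmv]
      have h1 : ((γ • w) z0)^2 ≤ ∑ i : Fin n, (γ • w) i ^ 2 :=
        Finset.single_le_sum (f := fun i => (γ • w) i ^ 2) (fun i _ => sq_nonneg _)
          (Finset.mem_univ z0)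
      calc |γ| * (ρ - s - m/2) ≤ |γ| * |w z0| :=
            mul_le_mul_of_nonneg_left habs0 (abs_nonneg γ)
        _ = |(γ • w) z0| := by
            simp [Pi.smul_apply, smul_eq_mul, abs_mul]
        _ = Real.sqrt (((γ • w) z0)^2) := (Real.sqrt_sq_eq_abs _).symm
        _ ≤ Real.sqrt (∑ i : Fin n, (γ • w) i ^ 2) := Real.sqrt_le_sqrt h1
    have hc_eq : ((1 + m/2 - s) / Real.sqrt T) * (|γ| * Real.sqrt T) = |γ| * (1 + m/2 - s) := by
      field_simp
    have hfinal1 : (1 + m/2 - s) ≤ ρ - s - m/2 := by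
      have : μ = m + 1 := by rw [hmdef]; ring
      nlinarith
    have hcpos : 0 ≤ (1 + m/2 - s) / Real.sqrt T := by
      apply div_nonneg _ (le_of_lt hsqT)
      nlinarith
    calc ((1 + (min α β - 1)/2 - r*((n:ℝ)-1)) / Real.sqrt (1 + ((min α β - 1)/(2*(1 - r*((n:ℝ)-1))))^2))
          * Real.sqrt (∑ i : Fin n, (γ • v) i ^ 2)
        = ((1 + m/2 - s) / Real.sqrt T) * Real.sqrt (∑ i : Fin n, (γ • v) i ^ 2) := by
          rw [hTdef, hmdef, hμdef, hsdef]
      _ ≤ ((1 + m/2 - s) / Real.sqrt T) * (|γ| * Real.sqrt T) :=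
          mul_le_mul_of_nonneg_left hxnorm hcpos
      _ = |γ| * (1 + m/2 - s) := hc_eq
      _ ≤ |γ| * (ρ - s - m/2) :=
          mul_le_mul_of_nonneg_left hfinal1 (abs_nonneg γ)
      _ ≤ Real.sqrt (∑ i : Fin n, ((bcMat n a).mulVec (γ • v)) i ^ 2) := hwnorm

open Matrix in
/-- Under Assumption (A) and the three bounds on `r(n−1)`, the cone `Ψ` is
contracting-invariant and expanding (w.r.t. the Euclidean norm) for `{A_L, A_R}`. -/
theorem stmt_1 (n : ℕ) (hn : 2 ≤ n) (aL aR : Fin n → ℝ) (α β r : ℝ)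
    (hA : assumptionA n aL aR α β r)
    (h1 : r * ((n : ℝ) - 1) < 3 / 7 * (1 - 1 / α))
    (h2 : r * ((n : ℝ) - 1) < 3 / 7 * (1 - 1 / β))
    (h3 : r * ((n : ℝ) - 1) < 1 / 10 * (1 / α + 1 / β - 1)) :
    (∀ v ∈ PsiSet n α β r,
      (bcMat n aL).mulVec v ∈ interior (PsiSet n α β r) ∪ {0} ∧
      (bcMat n aR).mulVec v ∈ interior (PsiSet n α β r) ∪ {0}) ∧
    ∃ c : ℝ, 1 < c ∧ ∀ v ∈ PsiSet n α β r,
      c * Real.sqrt (∑ i : Fin n, v i ^ 2) ≤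
        Real.sqrt (∑ i : Fin n, ((bcMat n aL).mulVec v) i ^ 2) ∧
      c * Real.sqrt (∑ i : Fin n, v i ^ 2) ≤
        Real.sqrt (∑ i : Fin n, ((bcMat n aR).mulVec v) i ^ 2) := by
  
  obtain ⟨hα, hβ, hr0, hr1, hspecL, hspecR⟩ := hA
  have hn2 : (2:ℝ) ≤ (n:ℝ) := by exact_mod_cast hn
  have hs_pos : 0 < r * ((n:ℝ)-1) := mul_pos hr0 (by linarith)
  have hμ1 : 1 < min α β := lt_min hα hβ
  have hmin37 : r*((n:ℝ)-1) < 3/7*(1 - 1/(min α β)) := by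
    rcases le_total α β with h|h
    · rw [min_eq_left h]; exact h1
    · rw [min_eq_right h]; exact h2
  have hmlt : min α β < 2 := by
    have hsum : 1 < 1/α + 1/β := by nlinarith
    rcases le_total α β with h|h
    · rw [min_eq_left h]
      have hb0 : 0 < β := by linarith
      have ha0 : 0 < α := by linarith
      have hle : 1/β ≤ 1/α := one_div_le_one_div_of_le ha0 h
      have hinv : 1 < 2 * (1/α) := by linarith
      have h' := (lt_div_iff₀ ha0).mp (by rwa [mul_one_div] at hinv)
      linarith
    · rw [min_eq_right h]
      have hb0 : 0 < β := by linarith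
      have ha0 : 0 < α := by linarith
      have hle : 1/α ≤ 1/β := one_div_le_one_div_of_le hb0 h
      have hinv : 1 < 2 * (1/β) := by linarith
      have h' := (lt_div_iff₀ hb0).mp (by rwa [mul_one_div] at hinv)
      linarith
  have hBL := bc_coeff_bounds n hn aL α r (le_of_lt hr0) hspecL
  have hBR := bc_coeff_bounds n hn aR (-β) r (le_of_lt hr0) hspecR
  have habsα : |α| = α := abs_of_pos (by linarith)
  have habsβ : |(-β)| = β := by rw [abs_neg]; exact abs_of_pos (by linarith)
  have hF1L : ∀ i : Fin n, (i:ℕ) = 0 → α - ((n:ℝ)-1)*r ≤ |aL i| := by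
    intro i hi; have := hBL.1 i hi; rwa [habsα] at this
  have hF2L : ∀ j : Fin n, |aL j| ≤ α * (((n-1).choose (j:ℕ)):ℝ) * r^(j:ℕ)
      + (((n-1).choose ((j:ℕ)+1)):ℝ) * r^((j:ℕ)+1) := by
    intro j; have := hBL.2 j; rwa [habsα] at this
  have hF1R : ∀ i : Fin n, (i:ℕ) = 0 → β - ((n:ℝ)-1)*r ≤ |aR i| := by
    intro i hi; have := hBR.1 i hi; rwa [habsβ] at this
  have hF2R : ∀ j : Fin n, |aR j| ≤ β * (((n-1).choose (j:ℕ)):ℝ) * r^(j:ℕ)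
      + (((n-1).choose ((j:ℕ)+1)):ℝ) * r^((j:ℕ)+1) := by
    intro j; have := hBR.2 j; rwa [habsβ] at this
  have hsideL := psi_side n hn aL α β r α hα hβ (min_le_left α β) hr0 hr1 hmin37 hmlt hF1L hF2L
  have hsideR := psi_side n hn aR α β r β hα hβ (min_le_right α β) hr0 hr1 hmin37 hmlt hF1R hF2R
  constructor
  · intro v hv
    exact ⟨(hsideL v hv).1, (hsideR v hv).1⟩
  · refine ⟨(1 + (min α β - 1)/2 - r*((n:ℝ)-1)) /
        Real.sqrt (1 + ((min α β - 1)/(2*(1 - r*((n:ℝ)-1))))^2), ?_, ?_⟩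
    · -- 1 < c
      set μ := min α β with hμdef
      set s := r * ((n:ℝ)-1) with hsdef
      set m := μ - 1 with hmdef
      have hm0 : 0 < m := by simp only [hmdef]; linarith
      have hm1 : m < 1 := by simp only [hmdef]; linarith
      have hμs : 7*μ*s < 3*(μ-1) := by
        have h' : 7*μ*s < 7*μ*(3/7 * (1 - 1/μ)) :=
          mul_lt_mul_of_pos_left hmin37 (by linarith)
        calc 7*μ*s < 7*μ*(3/7 * (1 - 1/μ)) := h'
          _ = 3*(μ-1) := by field_simp
      have hμs' : 7*(1+m)*s < 3*m := by
        have : μ = 1 + m := by rw [hmdef]; ring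
        rw [← this]
        simp only [hmdef]
        linarith [hμs]
      have hs1 : s < 1 := by
        have : 7*s < 7*μ*s := by nlinarith
        simp only [hmdef] at *
        linarith
      have hT := exp_ineq m s hm0 hm1 hs_pos hs1 hμs'
      have hApos : 0 < 1 + m/2 - s := by nlinarith
      have hsqlt : Real.sqrt (1 + (m/(2*(1-s)))^2) < 1 + m/2 - s :=
        (Real.sqrt_lt' hApos).mpr hT
      have hsqpos : 0 < Real.sqrt (1 + (m/(2*(1-s)))^2) :=
        Real.sqrt_pos.mpr (by positivity)
      exact (one_lt_div hsqpos).mpr hsqlt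
    · intro v hv
      exact ⟨(hsideL v hv).2, (hsideR v hv).2⟩
end

section
/- Suppose Assumption (A) holds. Then the parameters satisfy |a^L_1 + α| ≤ r(n−1); |a^L_i| ≤ binom(n−1, i−1)·(α + (n−i)r/i)·r^{i−1} for all i = 2,…,n−1; |a^L_n| ≤ α r^{n−1}; and likewise |a^R_1 − β| ≤ r(n−1); |a^R_i| ≤ binom(n−1, i−1)·(β + (n−i)r/i)·r^{i−1} for all i = 2,…,n−1; |a^R_n| ≤ β r^{n−1}. -/
open Matrix Polynomial Finset

namespace BCAux
open Matrix Polynomial Finset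
noncomputable section

def Complex.abs : AbsoluteValue ℂ ℝ where
  toFun z := ‖z‖
  map_mul' := norm_mul
  nonneg' := norm_nonneg
  eq_zero' _ := norm_eq_zero
  add_le' := norm_add_le

theorem Complex.abs_ofReal (r : ℝ) : Complex.abs (r : ℂ) = |r| := by
  show ‖(r : ℂ)‖ = |r|
  simp

def Gmat {S : Type*} [CommRing S] (n : ℕ) (b : Fin n → S) (x : S) : Matrix (Fin n) (Fin n) S :=
  Matrix.of fun i j =>
    (if (j : ℕ) = 0 then b i else 0) + (if (j : ℕ) = (i : ℕ) + 1 then -1 else 0)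
      + (if i = j then x else 0)


theorem det_Gmat {S : Type*} [CommRing S] : ∀ (n : ℕ) (b : Fin n → S) (x : S),
    0 < n → (Gmat n b x).det = x ^ n + ∑ i : Fin n, b i * x ^ (n - 1 - (i : ℕ)) := by
  intro n
  induction n with
  | zero => intro b x h; omega
  | succ n ih =>
    intro b x _
    rcases Nat.eq_zero_or_pos n with hn | hn
    · subst hn
      simp [Gmat, Matrix.det_fin_one, Fin.sum_univ_one]
      ring
    · rw [Matrix.det_succ_row _ (Fin.last n)]
      have hzero : ∀ j ∈ (univ : Finset (Fin (n+1))), j ∉ ({0, Fin.last n} : Finset (Fin (n+1))) →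
          (-1 : S) ^ ((Fin.last n : ℕ) + (j : ℕ)) * Gmat (n+1) b x (Fin.last n) j *
            ((Gmat (n+1) b x).submatrix (Fin.last n).succAbove j.succAbove).det = 0 := by
        intro j _ hj
        simp only [Finset.mem_insert, Finset.mem_singleton, not_or] at hj
        have h1 : (j : ℕ) ≠ 0 := fun h => hj.1 (Fin.ext h)
        have h2 : (j : ℕ) ≠ n + 1 := by have := j.isLt; omega
        have h3 : Fin.last n ≠ j := fun h => hj.2 h.symm
        simp [Gmat, h1, h2, h3, hj.1, Fin.val_last]
      rw [← Finset.sum_subset (Finset.subset_univ ({0, Fin.last n} : Finset (Fin (n+1)))) hzero]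
      have hne : (0 : Fin (n+1)) ≠ Fin.last n := by
        intro h
        have := congrArg Fin.val h
        simp [Fin.val_last] at this
        omega
      rw [Finset.sum_pair hne]
      -- entry values
      have e0 : Gmat (n+1) b x (Fin.last n) 0 = b (Fin.last n) := by
        simp [Gmat, hne.symm]
      have el : Gmat (n+1) b x (Fin.last n) (Fin.last n) = x := by
        simp [Gmat, hn.ne', Fin.val_last]
      -- minor at column 0 : lower triangular with diagonal -1
      have m0 : ((Gmat (n+1) b x).submatrix (Fin.last n).succAbove
          (0 : Fin (n+1)).succAbove).det = (-1 : S) ^ n := by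
        have hM : ∀ i j : Fin n, ((Gmat (n+1) b x).submatrix (Fin.last n).succAbove
            (0 : Fin (n+1)).succAbove) i j =
            (if (j : ℕ) = (i : ℕ) then -1 else 0) + (if (i : ℕ) = (j : ℕ) + 1 then x else 0) := by
          intro i j
          simp only [Matrix.submatrix_apply, Fin.succAbove_last, Fin.zero_succAbove, Gmat,
            Matrix.of_apply, Fin.val_succ, Fin.coe_castSucc]
          have h1 : (j : ℕ) + 1 ≠ 0 := by omega
          have h2 : ((j : ℕ) + 1 = (i : ℕ) + 1) ↔ ((j : ℕ) = (i : ℕ)) := by omega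
          have h3 : (i.castSucc = j.succ) ↔ ((i : ℕ) = (j : ℕ) + 1) := by
            rw [Fin.ext_iff]; simp
          simp [h1, h2, h3]
        have htri : ((Gmat (n+1) b x).submatrix (Fin.last n).succAbove
            (0 : Fin (n+1)).succAbove).BlockTriangular OrderDual.toDual := by
          intro i j hij
          have hij' : (i : ℕ) < (j : ℕ) := hij
          rw [hM]
          have h1 : (j : ℕ) ≠ (i : ℕ) := by omega
          have h2 : (i : ℕ) ≠ (j : ℕ) + 1 := by omega
          simp [h1, h2]
        have hdiag : ∀ i : Fin n, ((Gmat (n+1) b x).submatrix (Fin.last n).succAbove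
            (0 : Fin (n+1)).succAbove) i i = -1 := by
          intro i; rw [hM]; simp
        rw [Matrix.det_of_lowerTriangular _ htri,
          Finset.prod_congr rfl (fun i _ => hdiag i), Finset.prod_const]
        simp
      -- minor at column last : Gmat n (b ∘ castSucc) x
      have ml : ((Gmat (n+1) b x).submatrix (Fin.last n).succAbove
          (Fin.last n).succAbove).det = x ^ n + ∑ i : Fin n, b i.castSucc * x ^ (n - 1 - (i : ℕ)) := by
        have : ((Gmat (n+1) b x).submatrix (Fin.last n).succAbove (Fin.last n).succAbove) =
            Gmat n (fun i => b i.castSucc) x := by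
          ext i j
          simp only [Matrix.submatrix_apply, Fin.succAbove_last, Gmat, Matrix.of_apply,
            Fin.coe_castSucc]
          congr 1
          have : (i.castSucc = j.castSucc) ↔ (i = j) := by rw [Fin.ext_iff, Fin.ext_iff]; simp
          simp [this]
        rw [this, ih _ x hn]
      rw [e0, el, m0, ml]
      rw [Fin.sum_univ_castSucc (f := fun i : Fin (n+1) => b i * x ^ (n + 1 - 1 - (i : ℕ)))]
      simp only [Fin.val_last, Fin.coe_castSucc, Fin.val_zero]
      have hpow : ∀ i : Fin n, x * x ^ (n - 1 - (i : ℕ)) = x ^ (n - (i : ℕ)) := by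
        intro i
        rw [← pow_succ']
        congr 1
        have := i.isLt; omega
      have hsub : ∀ i : Fin n, n + 1 - 1 - (i : ℕ) = n - (i : ℕ) := by intro i; omega
      have h1 : (-1:S)^(n+0) * b (Fin.last n) * (-1:S)^n = b (Fin.last n) := by
        rw [Nat.add_zero, mul_comm, ← mul_assoc, ← pow_add]
        simp [Even.neg_one_pow ⟨n, rfl⟩]
      have h2 : (-1:S)^(n+n) = 1 := Even.neg_one_pow ⟨n, rfl⟩
      have hterm : ∀ i : Fin n, x * (b i.castSucc * x ^ (n - 1 - (i:ℕ))) =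
          b i.castSucc * x ^ (n - (i:ℕ)) := by
        intro i; rw [mul_left_comm, hpow]
      rw [h1, h2, one_mul, mul_add, Finset.mul_sum,
        Finset.sum_congr rfl (fun i _ => hterm i)]
      simp only [hsub, Nat.add_sub_cancel, Nat.sub_self, pow_zero, mul_one]
      rw [← pow_succ']
      ring


theorem charmatrix_bcMat (n : ℕ) (a : Fin n → ℝ) :
    charmatrix (bcMat n a) = Gmat n (fun i => C (a i)) X := by
  ext i j
  by_cases h : i = j
  · subst h
    rw [charmatrix_apply_eq]
    by_cases h0 : (i : ℕ) = 0
    · simp [bcMat, Gmat, h0]; ring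
    · simp [bcMat, Gmat, h0]
  · rw [charmatrix_apply_ne _ _ _ h]
    have hij : ¬ (i = j) := h
    by_cases h0 : (j : ℕ) = 0
    · have h1 : (j : ℕ) ≠ (i : ℕ) + 1 := by omega
      simp [bcMat, Gmat, h0, h1, hij]
    · by_cases h1 : (j : ℕ) = (i : ℕ) + 1
      · simp [bcMat, Gmat, h0, h1, hij]
      · simp [bcMat, Gmat, h0, h1, hij]


theorem charpoly_bcMat (n : ℕ) (hn : 0 < n) (a : Fin n → ℝ) :
    (bcMat n a).charpoly = X ^ n + ∑ i : Fin n, C (a i) * X ^ (n - 1 - (i : ℕ)) := by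
  rw [Matrix.charpoly, charmatrix_bcMat, det_Gmat n _ X hn]

theorem prod_abs_le (r : ℝ) (hr : 0 ≤ r) (t : Multiset ℂ)
    (h : ∀ z ∈ t, Complex.abs z ≤ r) :
    (t.map Complex.abs).prod ≤ r ^ Multiset.card t := by
  induction t using Multiset.induction_on with
  | empty => simp
  | cons a t ih =>
    simp only [Multiset.map_cons, Multiset.prod_cons, Multiset.card_cons]
    rw [pow_succ']
    refine mul_le_mul (h a (Multiset.mem_cons_self a t))
      (ih fun z hz => h z (Multiset.mem_cons_of_mem hz)) ?_ hr
    exact Multiset.prod_nonneg (by intro x hx; simp only [Multiset.mem_map] at hx; obtain ⟨z, _, rfl⟩ := hx; exact AbsoluteValue.nonneg _ _)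

theorem abs_esymm_le (s : Multiset ℂ) (r : ℝ) (hr : 0 ≤ r)
    (h : ∀ z ∈ s, Complex.abs z ≤ r) (m : ℕ) :
    Complex.abs (Multiset.esymm s m) ≤ ((Multiset.card s).choose m : ℝ) * r ^ m := by
  unfold Multiset.esymm
  calc Complex.abs ((Multiset.map Multiset.prod (Multiset.powersetCard m s)).sum)
      ≤ ((Multiset.map Multiset.prod (Multiset.powersetCard m s)).map Complex.abs).sum :=
        Multiset.le_sum_of_subadditive Complex.abs (map_zero _).le
          (fun x y => AbsoluteValue.add_le _ x y) _
    _ ≤ Multiset.card ((Multiset.map Multiset.prod (Multiset.powersetCard m s)).map Complex.abs)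
          • (r ^ m) := by
        refine Multiset.sum_le_card_nsmul _ _ ?_
        intro x hx
        simp only [Multiset.map_map, Multiset.mem_map, Function.comp_apply] at hx
        obtain ⟨t, ht, rfl⟩ := hx
        rw [Multiset.mem_powersetCard] at ht
        rw [map_multiset_prod]
        calc (t.map Complex.abs).prod ≤ r ^ Multiset.card t :=
              prod_abs_le r hr t fun z hz => h z (Multiset.mem_of_le ht.1 hz)
          _ = r ^ m := by rw [ht.2]
    _ = ((Multiset.card s).choose m : ℝ) * r ^ m := by
        rw [Multiset.card_map, Multiset.card_map, Multiset.card_powersetCard, nsmul_eq_mul]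

theorem coeff_X_sub_C_mul {c : ℂ} (P : Polynomial ℂ) (d : ℕ) (hd : 1 ≤ d) :
    ((X - C c) * P).coeff d = P.coeff (d - 1) - c * P.coeff d := by
  obtain ⟨m, rfl⟩ : ∃ m, d = m + 1 := ⟨d - 1, by omega⟩
  rw [sub_mul, coeff_sub, coeff_X_mul, coeff_C_mul]
  simp

theorem coeff_X_sub_C_mul_zero {c : ℂ} (P : Polynomial ℂ) :
    ((X - C c) * P).coeff 0 = -c * P.coeff 0 := by
  rw [mul_coeff_zero]
  simp


theorem key_bounds (n : ℕ) (hn : 2 ≤ n) (a : Fin n → ℝ) (ρ r : ℝ) (hr : 0 ≤ r)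
    (h : specA n (bcMat n a) ρ r) :
    |a ⟨0, by have := hn; omega⟩ + ρ| ≤ r * ((n : ℝ) - 1) ∧
    (∀ i : Fin n, 1 ≤ (i : ℕ) → (i : ℕ) ≤ n - 2 →
      |a i| ≤ ((n - 1).choose (i : ℕ) : ℝ) *
        (|ρ| + ((n : ℝ) - (((i : ℕ) : ℝ) + 1)) * r / (((i : ℕ) : ℝ) + 1)) * r ^ (i : ℕ)) ∧
    |a ⟨n - 1, by have := hn; omega⟩| ≤ |ρ| * r ^ (n - 1) := by
  obtain ⟨lam, hlam, hfac⟩ := h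
  set s : Multiset ℂ := Multiset.map lam Finset.univ.val with hs
  have hcard : Multiset.card s = n - 1 := by simp [hs]
  set P : Polynomial ℂ := (s.map fun t => X - C t).prod with hPdef
  have hP : ∏ j : Fin (n - 1), (X - C (lam j)) = P := by
    rw [hPdef, hs, Multiset.map_map]
    rfl
  rw [hP] at hfac
  -- the coefficients of charpoly
  have hcoeffL : ∀ k : ℕ, (hk : k < n) →
      ((X - C (ρ : ℂ)) * P).coeff (n - 1 - k) = ((a ⟨k, hk⟩ : ℝ) : ℂ) := by
    intro k hk
    rw [← hfac, charpoly_bcMat n (by omega) a]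
    rw [Polynomial.map_add, Polynomial.map_pow, Polynomial.map_X, Polynomial.map_sum]
    rw [coeff_add, coeff_X_pow, if_neg (by omega), zero_add, finset_sum_coeff]
    rw [Finset.sum_eq_single (⟨k, hk⟩ : Fin n)]
    · rw [Polynomial.map_mul, Polynomial.map_C, Polynomial.map_pow, Polynomial.map_X,
        coeff_C_mul, coeff_X_pow, if_pos rfl, mul_one]
      rfl
    · intro i _ hik
      rw [Polynomial.map_mul, Polynomial.map_C, Polynomial.map_pow, Polynomial.map_X,
        coeff_C_mul, coeff_X_pow, if_neg, mul_zero]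
      intro hcon
      apply hik
      have h1 : (i : ℕ) < n := i.isLt
      have : (i : ℕ) = k := by omega
      exact Fin.ext this
    · intro hcon
      exact absurd (Finset.mem_univ _) hcon
  -- coefficients of P via Vieta
  have hcoeffP : ∀ k : ℕ, k ≤ n - 1 →
      P.coeff k = (-1) ^ (n - 1 - k) * s.esymm (n - 1 - k) := by
    intro k hk
    rw [hPdef, Multiset.prod_X_sub_C_coeff s (by omega : k ≤ Multiset.card s), hcard]
  have habs : ∀ m : ℕ, Complex.abs (s.esymm m) ≤ (((n - 1).choose m : ℕ) : ℝ) * r ^ m := by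
    intro m
    have := abs_esymm_le s r hr ?_ m
    · rwa [hcard] at this
    · intro z hz
      rw [hs] at hz
      obtain ⟨j, _, rfl⟩ := Multiset.mem_map.mp hz
      exact hlam j
  refine ⟨?_, ?_, ?_⟩
  · -- k = 0
    have e1 : P.coeff (n - 1) = 1 := by
      rw [hcoeffP (n - 1) le_rfl, Nat.sub_self]
      simp [Multiset.esymm, Multiset.powersetCard_zero_left]
    have e2 : P.coeff (n - 2) = -(s.esymm 1) := by
      rw [hcoeffP (n - 2) (by omega), show n - 1 - (n - 2) = 1 by omega]
      simp
    have heq := hcoeffL 0 (by omega)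
    rw [coeff_X_sub_C_mul P (n - 1 - 0) (by omega), show n - 1 - 0 - 1 = n - 2 by omega,
      show n - 1 - 0 = n - 1 by omega, e1, e2, mul_one] at heq
    have hsum : ((a ⟨0, by omega⟩ + ρ : ℝ) : ℂ) = -(s.esymm 1) := by
      push_cast
      rw [← heq]
      ring
    calc |a ⟨0, by omega⟩ + ρ| = Complex.abs ((a ⟨0, by omega⟩ + ρ : ℝ) : ℂ) :=
          (Complex.abs_ofReal _).symm
      _ = Complex.abs (s.esymm 1) := by rw [hsum, map_neg_eq_map]
      _ ≤ (((n - 1).choose 1 : ℕ) : ℝ) * r ^ 1 := habs 1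
      _ = r * ((n : ℝ) - 1) := by
          rw [Nat.choose_one_right, Nat.cast_sub (by omega), pow_one]
          push_cast
          ring
  · -- middle coefficients
    intro i h1 h2
    set k : ℕ := (i : ℕ) with hkdef
    have hkn : k < n := i.isLt
    have heq := hcoeffL k hkn
    have hik : (⟨k, hkn⟩ : Fin n) = i := rfl
    rw [hik] at heq
    rw [coeff_X_sub_C_mul P (n - 1 - k) (by omega)] at heq
    have e1 : P.coeff (n - 1 - k) = (-1) ^ k * s.esymm k := by
      rw [hcoeffP (n - 1 - k) (by omega), show n - 1 - (n - 1 - k) = k by omega]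
    have e2 : P.coeff (n - 1 - k - 1) = (-1) ^ (k + 1) * s.esymm (k + 1) := by
      rw [hcoeffP (n - 1 - k - 1) (by omega), show n - 1 - (n - 1 - k - 1) = k + 1 by omega]
    rw [e1, e2] at heq
    have hb1 : Complex.abs ((-1 : ℂ) ^ (k + 1) * s.esymm (k + 1)) = Complex.abs (s.esymm (k + 1)) := by
      simp [_root_.map_mul]
    have hb2 : Complex.abs ((ρ : ℂ) * ((-1 : ℂ) ^ k * s.esymm k)) = |ρ| * Complex.abs (s.esymm k) := by
      simp [_root_.map_mul, Complex.abs_ofReal]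
    have hbound : |a i| ≤ (((n - 1).choose (k + 1) : ℕ) : ℝ) * r ^ (k + 1) +
        |ρ| * ((((n - 1).choose k : ℕ) : ℝ) * r ^ k) := by
      calc |a i| = Complex.abs ((a i : ℝ) : ℂ) := (Complex.abs_ofReal _).symm
        _ = Complex.abs ((-1 : ℂ) ^ (k + 1) * s.esymm (k + 1) - (ρ : ℂ) * ((-1 : ℂ) ^ k * s.esymm k)) := by
            rw [← heq]
        _ ≤ Complex.abs ((-1 : ℂ) ^ (k + 1) * s.esymm (k + 1)) +
            Complex.abs ((ρ : ℂ) * ((-1 : ℂ) ^ k * s.esymm k)) := by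
            exact (AbsoluteValue.sub_le_add _ _ _)
        _ = Complex.abs (s.esymm (k + 1)) + |ρ| * Complex.abs (s.esymm k) := by rw [hb1, hb2]
        _ ≤ (((n - 1).choose (k + 1) : ℕ) : ℝ) * r ^ (k + 1) +
            |ρ| * ((((n - 1).choose k : ℕ) : ℝ) * r ^ k) := by
            refine add_le_add (habs (k + 1)) ?_
            exact mul_le_mul_of_nonneg_left (habs k) (abs_nonneg ρ)
    refine hbound.trans (le_of_eq ?_)
    have hch : (((n - 1).choose (k + 1) : ℕ) : ℝ) = (((n - 1).choose k : ℕ) : ℝ) *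
        ((n : ℝ) - ((k : ℝ) + 1)) / ((k : ℝ) + 1) := by
      have hc := Nat.choose_succ_right_eq (n - 1) k
      have hcast : (((n - 1) - k : ℕ) : ℝ) = (n : ℝ) - ((k : ℝ) + 1) := by
        rw [Nat.cast_sub (by omega), Nat.cast_sub (by omega)]
        push_cast
        ring
      have hk1 : ((k : ℝ) + 1) ≠ 0 := by positivity
      field_simp
      calc (((n - 1).choose (k + 1) : ℕ) : ℝ) * ((k : ℝ) + 1)
          = (((n - 1).choose (k + 1) * (k + 1) : ℕ) : ℝ) := by push_cast; ring
        _ = (((n - 1).choose k * ((n - 1) - k) : ℕ) : ℝ) := by rw [hc]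
        _ = (((n - 1).choose k : ℕ) : ℝ) * ((n : ℝ) - ((k : ℝ) + 1)) := by
            push_cast [Nat.cast_sub (show k ≤ n - 1 by omega), Nat.cast_sub (show 1 ≤ n by omega)]
            ring
    rw [hch]
    ring
  · -- last coefficient
    have heq := hcoeffL (n - 1) (by omega)
    rw [show n - 1 - (n - 1) = 0 by omega, coeff_X_sub_C_mul_zero] at heq
    have e0 : P.coeff 0 = (-1) ^ (n - 1) * s.esymm (n - 1) := by
      rw [hcoeffP 0 (by omega), Nat.sub_zero]
    rw [e0] at heq
    calc |a ⟨n - 1, by omega⟩| = Complex.abs ((a ⟨n - 1, by omega⟩ : ℝ) : ℂ) :=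
          (Complex.abs_ofReal _).symm
      _ = |ρ| * Complex.abs (s.esymm (n - 1)) := by
          rw [← heq]
          simp [_root_.map_mul, Complex.abs_ofReal]
      _ ≤ |ρ| * ((((n - 1).choose (n - 1) : ℕ) : ℝ) * r ^ (n - 1)) :=
          mul_le_mul_of_nonneg_left (habs (n - 1)) (abs_nonneg ρ)
      _ = |ρ| * r ^ (n - 1) := by rw [Nat.choose_self]; push_cast; ring


end
end BCAux

open BCAux in
/-- Under Assumption (A), the parameters satisfy the stated bounds
`|a^L_1 + α| ≤ r(n−1)`, `|a^L_i| ≤ binom(n−1,i−1)(α + (n−i)r/i) r^{i−1}` for `i = 2,…,n−1`,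
`|a^L_n| ≤ α r^{n−1}`, and likewise for `a^R` with `β`. -/
theorem stmt_3 (n : ℕ) (hn : 2 ≤ n) (aL aR : Fin n → ℝ) (α β r : ℝ)
    (hA : assumptionA n aL aR α β r) :
    |aL ⟨0, by omega⟩ + α| ≤ r * ((n : ℝ) - 1) ∧
    (∀ i : Fin n, 1 ≤ (i : ℕ) → (i : ℕ) ≤ n - 2 →
      |aL i| ≤ ((n - 1).choose (i : ℕ) : ℝ) *
        (α + ((n : ℝ) - (((i : ℕ) : ℝ) + 1)) * r / (((i : ℕ) : ℝ) + 1)) * r ^ (i : ℕ)) ∧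
    |aL ⟨n - 1, by omega⟩| ≤ α * r ^ (n - 1) ∧
    |aR ⟨0, by omega⟩ - β| ≤ r * ((n : ℝ) - 1) ∧
    (∀ i : Fin n, 1 ≤ (i : ℕ) → (i : ℕ) ≤ n - 2 →
      |aR i| ≤ ((n - 1).choose (i : ℕ) : ℝ) *
        (β + ((n : ℝ) - (((i : ℕ) : ℝ) + 1)) * r / (((i : ℕ) : ℝ) + 1)) * r ^ (i : ℕ)) ∧
    |aR ⟨n - 1, by omega⟩| ≤ β * r ^ (n - 1) := by
  obtain ⟨hα, hβ, hr0, hr1, hL, hR⟩ := hA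
  have hr : (0 : ℝ) ≤ r := le_of_lt hr0
  obtain ⟨L1, L2, L3⟩ := BCAux.key_bounds n hn aL α r hr hL
  obtain ⟨R1, R2, R3⟩ := BCAux.key_bounds n hn aR (-β) r hr hR
  have habsα : |α| = α := abs_of_pos (by linarith)
  have habsβ : |(-β)| = β := by rw [abs_neg]; exact abs_of_pos (by linarith)
  refine ⟨L1, ?_, ?_, ?_, ?_, ?_⟩
  · intro i h1 h2
    have := L2 i h1 h2
    rwa [habsα] at this
  · rwa [habsα] at L3
  · rwa [← sub_eq_add_neg] at R1
  · intro i h1 h2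
    have := R2 i h1 h2
    rwa [habsβ] at this
  · rwa [habsβ] at R3
end

section
/- Suppose Assumption (A) holds, 0 < ε < 1/3, and r(n−1) ≤ ε. Then |C₁ − α/((α−1)β)| ≤ (2α + 2 + ε)·r(n−1)/((1−3ε)(α−1)β). -/
open Matrix Polynomial Finset

namespace Stmt10Aux

lemma det_bc : ∀ (n : ℕ) (a : Fin n → ℝ) (x : ℝ),
    (x • (1 : Matrix (Fin n) (Fin n) ℝ) - bcMat n a).det
      = x ^ n + ∑ i : Fin n, a i * x ^ (n - 1 - (i : ℕ)) := by
  intro n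
  induction n with
  | zero => intro a x; simp [Matrix.det_fin_zero]
  | succ n ih =>
    intro a x
    rcases Nat.eq_zero_or_pos n with hn | hn
    · subst hn
      simp [Matrix.det_fin_one, bcMat, Matrix.smul_apply, Matrix.one_apply]
    set M : Matrix (Fin (n+1)) (Fin (n+1)) ℝ := x • 1 - bcMat (n+1) a with hM
    have entry : ∀ i j : Fin (n+1), M i j =
        (if i = j then x else 0) - ((if (j:ℕ) = 0 then -a i else 0)
          + (if (j:ℕ) = (i:ℕ) + 1 then 1 else 0)) := by
      intro i j
      simp [hM, bcMat, Matrix.smul_apply, Matrix.one_apply]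
    have hne : (0 : Fin (n+1)) ≠ Fin.last n := by
      simp [Fin.ext_iff, Fin.val_last]; omega
    have key := Matrix.det_succ_row M (Fin.last n)
    rw [← Finset.sum_subset (Finset.subset_univ ({0, Fin.last n} : Finset (Fin (n+1))))
      (by
        intro j _ hj
        simp only [Finset.mem_insert, Finset.mem_singleton, not_or] at hj
        have h1 : (j : ℕ) ≠ 0 := fun h => hj.1 (Fin.ext h)
        have h2 : (j : ℕ) ≠ n := fun h => hj.2 (Fin.ext (by simp [h, Fin.val_last]))
        have h3 : (j : ℕ) ≠ n + 1 := by have := j.isLt; omega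
        have hz : M (Fin.last n) j = 0 := by
          rw [entry]
          have hlj : ¬ (Fin.last n = j) := fun h => h2 (by simp [← h, Fin.val_last])
          simp [hlj, h1, h3, Fin.val_last]
        rw [hz]; ring)] at key
    rw [Finset.sum_pair hne] at key
    have hsq : (-1:ℝ) ^ n * (-1:ℝ) ^ n = 1 := by
      rw [← pow_add, ← two_mul, pow_mul]; norm_num
    have hminor0 : (M.submatrix (Fin.last n).succAbove (0 : Fin (n+1)).succAbove).det
        = (-1) ^ n := by
      have hlt : (M.submatrix (Fin.last n).succAbove
          (0 : Fin (n+1)).succAbove).BlockTriangular OrderDual.toDual := by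
        intro i j hij
        have hij' : (i : ℕ) < (j : ℕ) := hij
        simp only [Matrix.submatrix_apply, Fin.succAbove_last, Fin.succAbove_zero]
        rw [entry]
        have h1 : ¬ (Fin.castSucc i = Fin.succ j) := by
          simp [Fin.ext_iff]; omega
        have h2 : (Fin.succ j : ℕ) ≠ 0 := by simp
        simp [h1, h2]
        omega
      rw [Matrix.det_of_lowerTriangular _ hlt]
      have hd : ∀ i : Fin n, (M.submatrix (Fin.last n).succAbove
          (0 : Fin (n+1)).succAbove) i i = -1 := by
        intro i
        simp only [Matrix.submatrix_apply, Fin.succAbove_last, Fin.succAbove_zero]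
        rw [entry]
        have h1 : ¬ (Fin.castSucc i = Fin.succ i) := by simp [Fin.ext_iff]
        have h2 : (Fin.succ i : ℕ) ≠ 0 := by simp
        have h3 : ((Fin.succ i : ℕ) = (Fin.castSucc i : ℕ) + 1) := by simp
        simp [h1, h2, h3]
      rw [Finset.prod_congr rfl (fun i _ => hd i)]
      simp
    have hminorl : M.submatrix (Fin.last n).succAbove (Fin.last n).succAbove
        = x • (1 : Matrix (Fin n) (Fin n) ℝ) - bcMat n (fun i => a i.castSucc) := by
      ext i j
      simp only [Matrix.submatrix_apply, Fin.succAbove_last]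
      rw [entry]
      simp [bcMat, Matrix.smul_apply, Matrix.one_apply, Fin.ext_iff]
    have e0 : M (Fin.last n) 0 = a (Fin.last n) := by
      rw [entry]
      simp [Fin.ext_iff, Fin.val_last, (by omega : ¬ (n:ℕ) = 0),
        (by omega : ¬ (0:ℕ) = n + 1)]
      exact fun h => absurd h (by omega)
    have el : M (Fin.last n) (Fin.last n) = x := by
      rw [entry]
      simp [Fin.val_last, (by omega : ¬ (n:ℕ) = 0), (by omega : ¬ (n:ℕ) = n + 1)]
      exact fun h => absurd h (by omega)
    rw [hminor0, hminorl, ih, e0, el, mul_add, Finset.mul_sum] at key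
    rw [key]
    rw [Fin.sum_univ_castSucc (f := fun i : Fin (n+1) => a i * x ^ (n + 1 - 1 - (i:ℕ)))]
    simp only [Fin.val_last, Fin.val_zero, Fin.coe_castSucc]
    have hpow : ∀ i : Fin n, x * (a i.castSucc * x ^ (n - 1 - (i:ℕ)))
        = a i.castSucc * x ^ (n + 1 - 1 - (i:ℕ)) := by
      intro i
      have h : n + 1 - 1 - (i:ℕ) = (n - 1 - (i:ℕ)) + 1 := by have := i.isLt; omega
      rw [h, pow_succ]; ring
    have h0 : (n + 1 - 1 - n) = 0 := by omega
    rw [h0]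
    have h2n : (-1:ℝ) ^ (n + n) = 1 := by rw [← two_mul, pow_mul]; norm_num
    simp only [h2n, one_mul, hpow]
    linear_combination a (Fin.last n) * hsq

lemma charpoly_eval (n : ℕ) (M : Matrix (Fin n) (Fin n) ℝ) (x : ℝ) :
    M.charpoly.eval x = (x • (1 : Matrix (Fin n) (Fin n) ℝ) - M).det := by
  rw [Matrix.charpoly, ← coe_evalRingHom, RingHom.map_det]
  congr 1
  ext i j
  by_cases h : i = j <;>
    simp [h, charmatrix_apply, Matrix.smul_apply, Matrix.one_apply, diagonal_apply]

lemma spec_eval (n : ℕ) (M : Matrix (Fin n) (Fin n) ℝ) (ρ : ℝ) (lam : Fin (n-1) → ℂ)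
    (hfac : M.charpoly.map (algebraMap ℝ ℂ)
      = (X - C (ρ:ℂ)) * ∏ j : Fin (n-1), (X - C (lam j))) (x : ℝ) :
    ((M.charpoly.eval x : ℝ) : ℂ)
      = ((x:ℂ) - ρ) * ∏ j : Fin (n-1), ((x:ℂ) - lam j) := by
  have h := congrArg (Polynomial.eval (x:ℂ)) hfac
  rw [Polynomial.eval_map] at h
  have h2 : Polynomial.eval₂ (algebraMap ℝ ℂ) ((x:ℂ)) M.charpoly
      = ((M.charpoly.eval x : ℝ) : ℂ) := by
    have hx : ((x:ℝ):ℂ) = algebraMap ℝ ℂ x := rfl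
    rw [hx, Polynomial.eval₂_at_apply]
    rfl
  rw [h2] at h
  rw [h]
  simp [Polynomial.eval_prod]

lemma geo_sum (α : ℝ) (hα : 1 < α) : ∀ j : ℕ,
    ∑ k ∈ Finset.Icc 1 j, (α⁻¹)^k = (1 - (α⁻¹)^j)/(α-1) := by
  have h1 : α - 1 ≠ 0 := by linarith
  have h0 : α ≠ 0 := by linarith
  intro j
  induction j with
  | zero => simp
  | succ j ih =>
    rw [Finset.sum_Icc_succ_top (by omega), ih]
    field_simp
    rw [pow_succ]
    have hx : α * (1 / α) = 1 := by field_simp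
    linear_combination (1 / α) ^ j * hx

lemma Tsum (n : ℕ) (α : ℝ) (hα : 1 < α) (aL : Fin n → ℝ) :
    ∑ k ∈ univ.filter (fun k : Fin n => 1 ≤ (k:ℕ)),
      (α⁻¹)^(k:ℕ) * ∑ j ∈ univ.filter (fun j : Fin n => (k:ℕ) ≤ (j:ℕ)), aL j
    = ((∑ j, aL j) - ∑ j, aL j * (α⁻¹)^(j:ℕ)) / (α - 1) := by
  have h1 : α - 1 ≠ 0 := by linarith
  simp only [Finset.mul_sum]
  rw [Finset.sum_comm' (s' := fun j : Fin n =>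
      univ.filter (fun k : Fin n => 1 ≤ (k:ℕ) ∧ (k:ℕ) ≤ (j:ℕ))) (t' := univ)
    (by intro k j; simp [Finset.mem_filter])]
  have inner : ∀ j : Fin n,
      ∑ k ∈ univ.filter (fun k : Fin n => 1 ≤ (k:ℕ) ∧ (k:ℕ) ≤ (j:ℕ)), (α⁻¹)^(k:ℕ) * aL j
      = aL j * ((1 - (α⁻¹)^(j:ℕ))/(α-1)) := by
    intro j
    rw [← Finset.sum_mul, ← geo_sum α hα (j:ℕ), mul_comm]
    congr 1
    rw [Finset.sum_filter]
    rw [Fin.sum_univ_eq_sum_range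
      (fun k => if 1 ≤ k ∧ k ≤ (j:ℕ) then (α⁻¹)^k else 0) n]
    rw [← Finset.sum_filter]
    congr 1
    ext k
    simp only [Finset.mem_filter, Finset.mem_range, Finset.mem_Icc]
    have := j.isLt
    omega
  rw [Finset.sum_congr rfl (fun j _ => inner j)]
  rw [eq_div_iff h1, Finset.sum_mul, ← Finset.sum_sub_distrib]
  refine Finset.sum_congr rfl fun j _ => ?_
  field_simp

lemma abs_prod_sub_one {ι : Type*} (s : Finset ι) (z : ι → ℂ) :
    ‖∏ j ∈ s, (1 - z j) - 1‖ ≤ ∏ j ∈ s, (1 + ‖z j‖) - 1 := by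
  induction s using Finset.cons_induction with
  | empty => simp
  | cons a s ha ih =>
    rw [Finset.prod_cons, Finset.prod_cons]
    have key : (1 - z a) * ∏ j ∈ s, (1 - z j) - 1
        = (1 - z a) * (∏ j ∈ s, (1 - z j) - 1) + (- z a) := by ring
    rw [key]
    refine (norm_add_le _ _).trans ?_
    rw [norm_mul, norm_neg]
    have h1 : ‖1 - z a‖ ≤ 1 + ‖z a‖ := by
      simpa using norm_sub_le (1:ℂ) (z a)
    have h2 := add_le_add (mul_le_mul h1 ih (norm_nonneg _)
      (by positivity)) (le_refl ‖z a‖)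
    refine h2.trans ?_
    have h3 : (1 + ‖z a‖) * (∏ j ∈ s, (1 + ‖z j‖) - 1)
        + ‖z a‖
        = (1 + ‖z a‖) * ∏ j ∈ s, (1 + ‖z j‖) - 1 := by ring
    rw [h3]

lemma pow_one_add_le (t : ℝ) (ht : 0 ≤ t) :
    ∀ m : ℕ, (m : ℝ) * t < 1 → (1 + t) ^ m * (1 - m * t) ≤ 1 := by
  intro m
  induction m with
  | zero => simp
  | succ m ih =>
    intro h
    push_cast at h ⊢
    have hm : (m : ℝ) * t < 1 := by nlinarith [Nat.cast_nonneg (α := ℝ) m]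
    have h1 : (0:ℝ) ≤ (1+t)^m := by positivity
    have step : (1 + t) * (1 - ((m:ℝ)+1) * t) ≤ 1 - (m:ℝ) * t := by
      nlinarith [sq_nonneg t, mul_nonneg (Nat.cast_nonneg (α := ℝ) m) (sq_nonneg t)]
    calc (1+t)^(m+1) * (1 - ((m:ℝ)+1) * t)
        = (1+t)^m * ((1+t) * (1 - ((m:ℝ)+1) * t)) := by ring
      _ ≤ (1+t)^m * (1 - (m:ℝ)*t) := mul_le_mul_of_nonneg_left step h1
      _ ≤ 1 := ih hm

end Stmt10Aux

set_option maxHeartbeats 2000000 in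
open Stmt10Aux in
/-- Under Assumption (A), `0 < ε < 1/3`, and `r(n−1) ≤ ε`, one has
`|C₁ − α/((α−1)β)| ≤ (2α + 2 + ε) r(n−1)/((1−3ε)(α−1)β)`. -/
theorem stmt_10 (n : ℕ) (hn : 2 ≤ n) (aL aR : Fin n → ℝ) (α β r ε : ℝ)
    (hA : assumptionA n aL aR α β r)
    (hε0 : 0 < ε) (hε1 : ε < 1 / 3) (hrn : r * ((n : ℝ) - 1) ≤ ε) :
    |Cfirst n aL aR α - α / ((α - 1) * β)| ≤
      (2 * α + 2 + ε) * (r * ((n : ℝ) - 1)) / ((1 - 3 * ε) * (α - 1) * β) := by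
  obtain ⟨hα, hβ, hr, hr1, ⟨lamL, hlamL, hfacL⟩, ⟨lamR, hlamR, hfacR⟩⟩ := hA
  have hα0 : (0:ℝ) < α := by linarith
  have hαne : α ≠ 0 := ne_of_gt hα0
  have hα1 : α - 1 ≠ 0 := by intro h; nlinarith
  have hβ0 : (0:ℝ) < β := by linarith
  have hn1 : (1:ℝ) ≤ (n:ℝ) - 1 := by
    have : (2:ℝ) ≤ (n:ℝ) := by exact_mod_cast hn
    linarith
  set ρ : ℝ := r * ((n:ℝ) - 1) with hρdef
  have hρ0 : 0 < ρ := by positivity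
  have hcast : ((n - 1 : ℕ) : ℝ) = (n:ℝ) - 1 := by
    have h1 : 1 ≤ n := by omega
    push_cast [h1]; ring
  -- eval of charpolys
  have evalL : ∀ x : ℝ, (bcMat n aL).charpoly.eval x
      = x ^ n + ∑ i : Fin n, aL i * x ^ (n - 1 - (i:ℕ)) := fun x => by
    rw [charpoly_eval, det_bc]
  have evalR : ∀ x : ℝ, (bcMat n aR).charpoly.eval x
      = x ^ n + ∑ i : Fin n, aR i * x ^ (n - 1 - (i:ℕ)) := fun x => by
    rw [charpoly_eval, det_bc]
  -- pow helper
  have hpw : ∀ i : Fin n, α ^ (n - 1 - (i:ℕ)) * (α⁻¹) ^ (n-1) = (α⁻¹) ^ (i:ℕ) := by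
    intro i
    have hi := i.isLt
    have hkey : α ^ (n - 1 - (i:ℕ)) * α ^ (i:ℕ) = α ^ (n-1) := by
      rw [← pow_add]; congr 1; omega
    rw [inv_pow, inv_pow]
    field_simp
    linear_combination hkey
  have hαn : α ^ n * (α⁻¹) ^ (n-1) = α := by
    have hkey : α ^ n = α ^ (n-1) * α := by rw [← pow_succ]; congr 1; omega
    rw [hkey, inv_pow]
    field_simp
  -- Δ
  set Δ : ℝ := (1 - bcMat n aL).det with hΔdef
  have hΔ1 : Δ = (bcMat n aL).charpoly.eval 1 := by
    rw [charpoly_eval]; congr 1; rw [one_smul]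
  have hΔsum : Δ = 1 + ∑ i : Fin n, aL i := by
    rw [hΔ1, evalL]; simp
  have hΔC : ((Δ : ℝ) : ℂ) = (1 - (α:ℂ)) * ∏ j : Fin (n-1), (1 - lamL j) := by
    rw [hΔ1]
    rw [spec_eval n (bcMat n aL) α lamL hfacL 1]
    norm_num
  have hΔne : Δ ≠ 0 := by
    intro h0
    rw [h0] at hΔC
    have : (1 - (α:ℂ)) * ∏ j : Fin (n-1), (1 - lamL j) ≠ 0 := by
      apply mul_ne_zero
      · intro h
        have : (α:ℂ) = 1 := by linear_combination -h
        have : α = 1 := by exact_mod_cast this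
        exact hα1 (by linarith)
      · rw [Finset.prod_ne_zero_iff]
        intro j _
        intro h
        have hj1 : lamL j = 1 := by linear_combination -h
        have := hlamL j
        rw [hj1] at this
        simp at this
        linarith
    exact this (by rw [← hΔC]; simp)
  -- sum aL over α powers
  have evalLα : α ^ n + ∑ i : Fin n, aL i * α ^ (n - 1 - (i:ℕ)) = 0 := by
    have h := spec_eval n (bcMat n aL) α lamL hfacL α
    rw [evalL α] at h
    have : ((α ^ n + ∑ i : Fin n, aL i * α ^ (n - 1 - (i:ℕ)) : ℝ) : ℂ) = 0 := by
      rw [h]; simp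
    exact_mod_cast this
  have hSinv : ∑ i : Fin n, aL i * (α⁻¹) ^ (i:ℕ) = -α := by
    have h1 : ∑ i : Fin n, aL i * (α⁻¹) ^ (i:ℕ)
        = (∑ i : Fin n, aL i * α ^ (n - 1 - (i:ℕ))) * (α⁻¹) ^ (n-1) := by
      rw [Finset.sum_mul]
      exact Finset.sum_congr rfl fun i _ => by rw [mul_assoc, hpw i]
    rw [h1, (by linarith [evalLα] : ∑ i : Fin n, aL i * α ^ (n - 1 - (i:ℕ)) = -α ^ n)]
    rw [neg_mul, hαn]
  -- zpow conversion
  have hzpow : ∀ k : ℕ, α ^ (-(k:ℤ)) = (α⁻¹) ^ k := by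
    intro k
    rw [_root_.zpow_neg, zpow_natCast, inv_pow]
  -- denominator
  set Dr : ℝ := ∑ i : Fin n, (α⁻¹) ^ (i:ℕ) * aR i with hDrdef
  set E : ℝ := α ^ n + ∑ i : Fin n, aR i * α ^ (n - 1 - (i:ℕ)) with hEdef
  have hDrE : Dr = E * (α⁻¹) ^ (n-1) - α := by
    rw [hDrdef, hEdef]
    rw [add_mul, hαn, Finset.sum_mul]
    have hc : ∀ i : Fin n,
        aR i * α ^ (n - 1 - (i:ℕ)) * (α⁻¹)^(n-1) = (α⁻¹)^(i:ℕ) * aR i := by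
      intro i; rw [mul_assoc, hpw i]; ring
    rw [Finset.sum_congr rfl (fun i _ => hc i)]
    ring
  have hEC : ((E : ℝ) : ℂ) = ((α:ℂ) + β) * ∏ j : Fin (n-1), ((α:ℂ) - lamR j) := by
    have h := spec_eval n (bcMat n aR) (-β) lamR hfacR α
    rw [evalR α] at h
    rw [hEdef]
    push_cast
    push_cast at h
    rw [h]
    ring
  set P : ℂ := ∏ j : Fin (n-1), (1 - (α:ℂ)⁻¹ * lamR j) with hPdef
  have hαC : (α:ℂ) ≠ 0 := by exact_mod_cast hαne
  have hprodP : (∏ j : Fin (n-1), ((α:ℂ) - lamR j)) * ((α:ℂ)⁻¹) ^ (n-1) = P := by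
    rw [hPdef]
    rw [(by simp [Finset.prod_const, Finset.card_univ] :
      ((α:ℂ)⁻¹) ^ (n-1) = ∏ _j : Fin (n-1), (α:ℂ)⁻¹)]
    rw [← Finset.prod_mul_distrib]
    refine Finset.prod_congr rfl fun j _ => ?_
    field_simp
  have hDC : ((Dr : ℝ) : ℂ) = ((α:ℂ) + β) * P - α := by
    have h1 : ((Dr:ℝ):ℂ) = ((E:ℝ):ℂ) * (((α⁻¹)^(n-1) : ℝ) : ℂ) - (α:ℂ) := by
      rw [hDrE]; push_cast; ring
    have hinv : (((α⁻¹)^(n-1):ℝ):ℂ) = ((α:ℂ)⁻¹)^(n-1) := by push_cast; ring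
    rw [h1, hEC, hinv, mul_assoc, hprodP]
  have hDβC : ((Dr - β : ℝ) : ℂ) = ((α:ℂ) + β) * (P - 1) := by
    push_cast
    push_cast at hDC
    rw [hDC]
    ring
  -- bound on q
  set q : ℝ := ‖P - 1‖ with hqdef
  have hq0 : 0 ≤ q := norm_nonneg _
  have hqbound : q * (α * (1 - ε)) ≤ ρ := by
    have hz : ∀ j : Fin (n-1), ‖(α:ℂ)⁻¹ * lamR j‖ ≤ r / α := by
      intro j
      rw [norm_mul, norm_inv, Complex.norm_real, Real.norm_eq_abs, abs_of_pos hα0]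
      rw [div_eq_inv_mul]
      exact mul_le_mul_of_nonneg_left (hlamR j) (by positivity)
    have ha := abs_prod_sub_one (univ : Finset (Fin (n-1)))
      (fun j => (α:ℂ)⁻¹ * lamR j)
    have hb : ∏ j : Fin (n-1), (1 + ‖(α:ℂ)⁻¹ * lamR j‖)
        ≤ (1 + r / α) ^ (n-1) := by
      calc ∏ j : Fin (n-1), (1 + ‖(α:ℂ)⁻¹ * lamR j‖)
          ≤ ∏ _j : Fin (n-1), (1 + r / α) :=
            Finset.prod_le_prod (fun j _ => by positivity)
              (fun j _ => by linarith [hz j])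
        _ = (1 + r / α) ^ (n-1) := by
            rw [Finset.prod_const, Finset.card_univ, Fintype.card_fin]
    have hq1 : q ≤ (1 + r/α) ^ (n-1) - 1 := by
      refine ha.trans ?_
      linarith
    set t : ℝ := r / α with htdef
    have ht0 : 0 ≤ t := by positivity
    have hmt0 : (0:ℝ) ≤ ((n-1:ℕ):ℝ) * t := by positivity
    have hmtρ : (((n-1:ℕ):ℝ) * t) * α = ρ := by
      rw [htdef, hcast]
      field_simp
      ring
    have hmtε : ((n-1:ℕ):ℝ) * t ≤ ε := by
      nlinarith [hmtρ, mul_nonneg hmt0 (show (0:ℝ) ≤ α - 1 by linarith)]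
    have hmt1 : ((n-1:ℕ):ℝ) * t < 1 := by linarith
    have hpow := pow_one_add_le t ht0 (n-1) hmt1
    set X : ℝ := (1 + t) ^ (n-1) with hXdef
    have hX1 : q ≤ X - 1 := hq1
    have h2 : (X - 1) * (1 - ((n-1:ℕ):ℝ)*t) ≤ ((n-1:ℕ):ℝ)*t := by nlinarith [hpow]
    have c0 : q * (1 - ε) ≤ q * (1 - ((n-1:ℕ):ℝ)*t) :=
      mul_le_mul_of_nonneg_left (by linarith) hq0
    have c1 : q * (1 - ((n-1:ℕ):ℝ)*t) ≤ (X - 1) * (1 - ((n-1:ℕ):ℝ)*t) :=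
      mul_le_mul_of_nonneg_right hX1 (by linarith)
    have c2 : q * (1 - ε) ≤ ((n-1:ℕ):ℝ)*t := by linarith
    nlinarith [mul_le_mul_of_nonneg_left c2 hα0.le, hmtρ]
  -- |Dr - β| = (α+β) q
  have hA1 : |Dr - β| = (α + β) * q := by
    have h1 : ‖(((Dr - β : ℝ) : ℂ))‖ = |Dr - β| := by rw [Complex.norm_real, Real.norm_eq_abs]
    rw [← h1, hDβC, norm_mul]
    congr 1
    have : ((α:ℂ) + β) = (((α + β : ℝ)) : ℂ) := by push_cast; ring
    rw [this, Complex.norm_real, Real.norm_eq_abs, abs_of_pos (by linarith)]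
  have hA1nn : (0:ℝ) ≤ |Dr - β| := abs_nonneg _
  have hε3 : (0:ℝ) < 1 - 3*ε := by linarith
  have hε1' : (0:ℝ) < 1 - ε := by linarith
  have hα1' : (0:ℝ) < α - 1 := by linarith
  have hDlb : β - |Dr - β| ≤ Dr := by
    have := neg_abs_le (Dr - β)
    linarith
  have A1mul : |Dr - β| * (α*(1-ε)) ≤ (α+β)*ρ := by
    rw [hA1]
    nlinarith [mul_le_mul_of_nonneg_left hqbound (show (0:ℝ) ≤ α+β by linarith)]
  have h2ab : (α+β)*ρ ≤ 2*α*β*ε := by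
    have hab : α+β ≤ 2*α*β := by nlinarith
    nlinarith [mul_le_mul_of_nonneg_right hab hρ0.le,
      mul_le_mul_of_nonneg_left hrn (show (0:ℝ) ≤ 2*α*β by positivity)]
  have A1small : |Dr - β| * (1-ε) ≤ 2*β*ε := by
    have : α * (|Dr - β| * (1-ε)) ≤ α * (2*β*ε) := by nlinarith [A1mul, h2ab]
    exact le_of_mul_le_mul_left this hα0
  have f2 : β*(1-3*ε) ≤ Dr*(1-ε) := by
    nlinarith [mul_le_mul_of_nonneg_right hDlb hε1'.le]
  have hDpos : (0:ℝ) < Dr := by nlinarith [f2]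
  have hDne : Dr ≠ 0 := ne_of_gt hDpos
  -- rewrite Cfirst
  have hCf : Cfirst n aL aR α = (α/(α-1)) / Dr := by
    simp only [Cfirst]
    simp only [hzpow]
    rw [Tsum n α hα aL, hSinv, ← hΔdef, ← hDrdef]
    rw [show (∑ j : Fin n, aL j) = Δ - 1 by linarith [hΔsum]]
    congr 1
    field_simp
    ring
  have heq : (α/(α-1))/Dr - α/((α-1)*β) = α*(β - Dr)/((α-1)*Dr*β) := by
    field_simp
  rw [hCf, heq, abs_div, abs_mul]
  rw [abs_of_pos (show (0:ℝ) < (α-1)*Dr*β by positivity)]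
  rw [abs_of_pos hα0, abs_sub_comm]
  rw [div_le_div_iff₀ (by positivity) (by positivity)]
  have h3 : α + β ≤ (2*α+2+ε)*β := by nlinarith
  have hS : α * |Dr - β| * (1-3*ε) ≤ (2*α+2+ε)*ρ*Dr := by
    have h1 := mul_le_mul_of_nonneg_right A1mul hε3.le
    have h2 := mul_le_mul_of_nonneg_right h3 (mul_nonneg hρ0.le hε3.le)
    have h4 := mul_le_mul_of_nonneg_left f2
      (mul_nonneg (show (0:ℝ) ≤ 2*α+2+ε by linarith) hρ0.le)
    have h5 : α * |Dr - β| * (1-3*ε) * (1-ε) ≤ (2*α+2+ε)*ρ*Dr * (1-ε) := by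
      nlinarith [h1, h2, h4]
    exact le_of_mul_le_mul_right h5 hε1'
  nlinarith [mul_le_mul_of_nonneg_right hS (show (0:ℝ) ≤ (α-1)*β by positivity)]
end

section
/- Let n ≥ 2 be an integer and r > 0 be real with r(n−1) ≤ 1. Then Σ_{i=2}^{n−1} (binom(n−1, i−1)·r^{i−1})² < 2 r²(n−1)² (where for n = 2 the empty sum is 0). -/
lemma two_pow_pred_le_factorial (j : ℕ) (hj : 1 ≤ j) : 2 ^ (j - 1) ≤ j.factorial := by
  induction j with
  | zero => omega
  | succ k ih =>
    rcases Nat.eq_or_lt_of_le hj with h | h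
    · simp [← h]
    · have hk : 1 ≤ k := by omega
      have ihk := ih hk
      have h1 : 2 ^ (k + 1 - 1) = 2 * 2 ^ (k - 1) := by
        rw [show k + 1 - 1 = (k - 1) + 1 by omega, pow_succ]; ring
      rw [h1, Nat.factorial_succ]
      exact Nat.mul_le_mul (by omega) ihk

/-- Let `n ≥ 2` be an integer and `r > 0` real with `r(n−1) ≤ 1`. Then
`Σ_{i=2}^{n−1} (binom(n−1, i−1)·r^{i−1})² < 2 r²(n−1)²`. -/
theorem stmt_19 (n : ℕ) (r : ℝ) (hn : 2 ≤ n) (hr : 0 < r)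
    (hrn : r * ((n : ℝ) - 1) ≤ 1) :
    ∑ i ∈ Finset.Icc 2 (n - 1), (((n - 1).choose (i - 1) : ℝ) * r ^ (i - 1)) ^ 2
      < 2 * r ^ 2 * ((n : ℝ) - 1) ^ 2 := by
  set m := n - 1 with hm
  have hmcast : ((n : ℝ) - 1) = (m : ℝ) := by
    rw [hm]; push_cast [Nat.cast_sub (by omega : 1 ≤ n)]; ring
  rw [hmcast] at hrn ⊢
  have hm1 : 1 ≤ m := by omega
  have hmpos : (0 : ℝ) < (m : ℝ) := by exact_mod_cast hm1
  have hrm : 0 < r * (m : ℝ) := mul_pos hr hmpos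
  -- termwise bound
  have key : ∀ i ∈ Finset.Icc 2 m,
      (((m.choose (i - 1)) : ℝ) * r ^ (i - 1)) ^ 2
        ≤ (r * (m : ℝ)) ^ 2 * (1 / 4 : ℝ) ^ (i - 2) := by
    intro i hi
    simp only [Finset.mem_Icc] at hi
    set j := i - 1 with hj
    have hj1 : 1 ≤ j := by omega
    have h1 : ((m.choose j) : ℝ) ≤ (m : ℝ) ^ j / (j.factorial : ℝ) :=
      Nat.choose_le_pow_div j m
    have h2 : (2 : ℝ) ^ (j - 1) ≤ (j.factorial : ℝ) := by
      exact_mod_cast two_pow_pred_le_factorial j hj1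
    have hfpos : (0 : ℝ) < (j.factorial : ℝ) := by positivity
    have h3 : (m : ℝ) ^ j / (j.factorial : ℝ) ≤ (m : ℝ) ^ j / (2 : ℝ) ^ (j - 1) := by
      apply div_le_div_of_nonneg_left (by positivity) (by positivity) h2
    have h4 : ((m.choose j) : ℝ) * r ^ j ≤ (r * (m : ℝ)) ^ j / (2 : ℝ) ^ (j - 1) := by
      have hrp : (0 : ℝ) ≤ r ^ j := by positivity
      calc ((m.choose j) : ℝ) * r ^ j ≤ ((m : ℝ) ^ j / (2 : ℝ) ^ (j - 1)) * r ^ j :=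
            mul_le_mul_of_nonneg_right (h1.trans h3) hrp
        _ = (r * (m : ℝ)) ^ j / (2 : ℝ) ^ (j - 1) := by
            rw [mul_pow]; ring
    have h5 : (r * (m : ℝ)) ^ j = (r * (m : ℝ)) * (r * (m : ℝ)) ^ (j - 1) := by
      conv_lhs => rw [show j = (j - 1) + 1 by omega]
      rw [pow_succ]; ring
    have h6 : (r * (m : ℝ)) ^ (j - 1) ≤ 1 := pow_le_one₀ hrm.le hrn
    have h7 : ((m.choose j) : ℝ) * r ^ j ≤ (r * (m : ℝ)) * (1 / 2 : ℝ) ^ (j - 1) := by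
      calc ((m.choose j) : ℝ) * r ^ j ≤ (r * (m : ℝ)) ^ j / (2 : ℝ) ^ (j - 1) := h4
        _ = (r * (m : ℝ)) * (r * (m : ℝ)) ^ (j - 1) / (2 : ℝ) ^ (j - 1) := by rw [h5]
        _ ≤ (r * (m : ℝ)) * 1 / (2 : ℝ) ^ (j - 1) := by
            apply div_le_div_of_nonneg_right _ (by positivity)
            nlinarith [pow_nonneg hrm.le (j - 1)]
        _ = (r * (m : ℝ)) * (1 / 2 : ℝ) ^ (j - 1) := by
            rw [div_pow]; ring
    have hnn : (0 : ℝ) ≤ ((m.choose j) : ℝ) * r ^ j := by positivity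
    have := pow_le_pow_left₀ hnn h7 2
    calc (((m.choose j) : ℝ) * r ^ j) ^ 2
        ≤ ((r * (m : ℝ)) * (1 / 2 : ℝ) ^ (j - 1)) ^ 2 := this
      _ = (r * (m : ℝ)) ^ 2 * (1 / 4 : ℝ) ^ (j - 1) := by
          rw [mul_pow]
          congr 1
          rw [← pow_mul, Nat.mul_comm, pow_mul]
          norm_num
      _ = (r * (m : ℝ)) ^ 2 * (1 / 4 : ℝ) ^ (i - 2) := by
          congr 2 <;> omega
  have hsum1 := Finset.sum_le_sum key
  have hsum2 : ∑ i ∈ Finset.Icc 2 m, (r * (m : ℝ)) ^ 2 * (1 / 4 : ℝ) ^ (i - 2)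
      = (r * (m : ℝ)) ^ 2 * ∑ k ∈ Finset.range (m - 1), (1 / 4 : ℝ) ^ k := by
    rw [Finset.mul_sum, show Finset.Icc 2 m = Finset.Ico 2 (m + 1) by
      rw [Finset.Ico_add_one_right_eq_Icc], Finset.sum_Ico_eq_sum_range]
    apply Finset.sum_congr rfl
    intro k _
    have hk : 2 + k - 2 = k := by omega
    rw [hk]
  have hgeom : ∑ k ∈ Finset.range (m - 1), (1 / 4 : ℝ) ^ k ≤ 4 / 3 := by
    rw [geom_sum_eq (by norm_num : (1 / 4 : ℝ) ≠ 1)]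
    have h0 : (0 : ℝ) ≤ (1 / 4 : ℝ) ^ (m - 1) := by positivity
    rw [div_le_iff_of_neg (by norm_num : (1 / 4 : ℝ) - 1 < 0)]
    nlinarith
  calc ∑ i ∈ Finset.Icc 2 m, (((m.choose (i - 1)) : ℝ) * r ^ (i - 1)) ^ 2
      ≤ (r * (m : ℝ)) ^ 2 * ∑ k ∈ Finset.range (m - 1), (1 / 4 : ℝ) ^ k := by
        rw [← hsum2]; exact hsum1
    _ ≤ (r * (m : ℝ)) ^ 2 * (4 / 3) :=
        mul_le_mul_of_nonneg_left hgeom (by positivity)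
    _ < 2 * r ^ 2 * (m : ℝ) ^ 2 := by nlinarith [sq_nonneg (r * (m:ℝ)), hrm]
end
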